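/- arXiv:1905.12318 — 3 statements merged into one kernel-verified Lean document; each statement's English description precedes it below -/
import Mathlib

section
/- Let $k\ge 3$, let $G$ be a graph, and let $u\in V(G)$. Let $G_u\bowtie K_k$ be the graph obtained from the disjoint union of $G$ and the complete graph $K_k$ by identifying $u$ with one vertex of $K_k$. Then $G$ is a $k$-chromatic graph critical for the chromatic number (i.e., $\chi(G)=k$ and $\chi(G-e)=k-1$ for every edge $e$ of $G$) if and only if $G_u\bowtie K_k$ is $(k,2)$-critical. -/
open SimpleGraph

/-- The chromatic edge-stability number `esχ(G)`: the minimum number of edges whose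
removal from `G` results in a spanning subgraph `G'` with `χ(G') = χ(G) - 1`. -/
noncomputable def esChi {V : Type} (G : SimpleGraph V) : ℕ :=
  sInf {n : ℕ | ∃ F : Finset (Sym2 V), ↑F ⊆ G.edgeSet ∧ F.card = n ∧
    (G.deleteEdges ↑F).chromaticNumber + 1 = G.chromaticNumber}

/-- A graph is edge-stability critical if deleting any edge decreases `esχ`. -/
def EdgeStabilityCritical {V : Type} (G : SimpleGraph V) : Prop :=
  ∀ e ∈ G.edgeSet, esChi (G.deleteEdges {e}) < esChi G

/-- `G` is `(k, ℓ)`-critical: edge-stability critical with `χ(G) = k` and `esχ(G) = ℓ`. -/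
def IsKLCritical {V : Type} (G : SimpleGraph V) (k ℓ : ℕ) : Prop :=
  EdgeStabilityCritical G ∧ G.chromaticNumber = (k : ℕ∞) ∧ esChi G = ℓ

/-- `H` is an odd cycle subgraph of `G`: the subgraph of some odd-length cycle of `G`. -/
def IsOddCycleSubgraph {V : Type} (G : SimpleGraph V) (H : G.Subgraph) : Prop :=
  ∃ (u : V) (w : G.Walk u u), w.IsCycle ∧ Odd w.length ∧ w.toSubgraph = H

/-- `H` is a path subgraph of `G`: the subgraph of some path of `G`. -/
def IsPathSubgraph {V : Type} (G : SimpleGraph V) (H : G.Subgraph) : Prop :=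
  ∃ (u v : V) (w : G.Walk u v), w.IsPath ∧ w.toSubgraph = H

/-- `G_u ⋈ K_k`: the graph obtained from the disjoint union of `G` and the complete graph
`K_k` by identifying the vertex `u` of `G` with one vertex of `K_k`; the `k - 1` remaining
clique vertices are the `Sum.inr` vertices. -/
def bowtieClique {V : Type} (G : SimpleGraph V) (u : V) (k : ℕ) :
    SimpleGraph (V ⊕ Fin (k - 1)) where
  Adj x y :=
    match x, y with
    | Sum.inl a, Sum.inl b => G.Adj a b
    | Sum.inl a, Sum.inr _ => a = u
    | Sum.inr _, Sum.inl b => b = u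
    | Sum.inr i, Sum.inr j => i ≠ j
  symm := by
    constructor
    rintro (a | i) (b | j) h
    · exact G.adj_symm h
    · exact h
    · exact h
    · exact Ne.symm h
  loopless := by
    constructor
    rintro (a | i) h
    · exact G.loopless.irrefl a h
    · exact h rfl

namespace BowtieAux

open Sum

/-- recoloring: deleting one edge drops colorability by at most one -/
lemma colorable_succ_of_del {W : Type} (H : SimpleGraph W) (e : Sym2 W) {n : ℕ}
    (h : (H.deleteEdges {e}).Colorable n) : H.Colorable (n + 1) := by
  induction e using Sym2.ind with
  | _ a b =>
    obtain ⟨c⟩ := h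
    classical
    refine ⟨Coloring.mk (fun v => if v = a then Fin.last n else (c v).castSucc) ?_⟩
    intro v w hvw hcol
    by_cases hv : v = a <;> by_cases hw : w = a
    · rw [hv, hw] at hvw; exact H.loopless.irrefl a hvw
    · simp only [hv, hw, if_pos, if_neg, if_true] at hcol
      exact absurd hcol.symm (Fin.castSucc_lt_last (c w)).ne
    · simp only [hv, hw, if_neg, if_true] at hcol
      exact absurd hcol (Fin.castSucc_lt_last (c v)).ne
    · simp only [hv, hw, if_neg] at hcol
      have hadj : (H.deleteEdges {s(a,b)}).Adj v w := by
        rw [SimpleGraph.deleteEdges_adj]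
        refine ⟨hvw, fun hm => ?_⟩
        rw [Set.mem_singleton_iff] at hm
        have : a ∈ s(v, w) := by rw [hm]; simp
        rcases Sym2.mem_iff.1 this with h1 | h1
        · exact hv h1.symm
        · exact hw h1.symm
      exact c.valid hadj (Fin.castSucc_injective n hcol)

lemma chrom_ne_top {W : Type} [Fintype W] (H : SimpleGraph W) : H.chromaticNumber ≠ ⊤ :=
  chromaticNumber_ne_top_iff_exists.2 ⟨_, H.colorable_of_fintype⟩

lemma chrom_le_del_add_one {W : Type} [Fintype W] (H : SimpleGraph W) (e : Sym2 W) :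
    H.chromaticNumber ≤ (H.deleteEdges {e}).chromaticNumber + 1 := by
  set H' := H.deleteEdges {e}
  have hcol := H'.colorable_chromaticNumber_of_fintype
  have h2 := (colorable_succ_of_del H e hcol).chromaticNumber_le
  have hco : ((ENat.toNat H'.chromaticNumber : ℕ) : ℕ∞) = H'.chromaticNumber :=
    ENat.coe_toNat (chrom_ne_top H')
  calc H.chromaticNumber ≤ ((ENat.toNat H'.chromaticNumber + 1 : ℕ) : ℕ∞) := h2
    _ = H'.chromaticNumber + 1 := by push_cast [hco]; rfl

lemma le_chrom_of_forall {W : Type} [Fintype W] (H : SimpleGraph W) (k : ℕ)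
    (h : ∀ n, H.Colorable n → k ≤ n) : (k : ℕ∞) ≤ H.chromaticNumber := by
  have hcol := H.colorable_chromaticNumber_of_fintype
  have hco : ((ENat.toNat H.chromaticNumber : ℕ) : ℕ∞) = H.chromaticNumber :=
    ENat.coe_toNat (chrom_ne_top H)
  rw [← hco]
  exact_mod_cast h _ hcol

lemma enat_cancel {x : ℕ∞} {k : ℕ} (hk : 1 ≤ k) (h : x + 1 = (k : ℕ∞)) :
    x = ((k - 1 : ℕ) : ℕ∞) := by
  have hx : x ≠ ⊤ := by rintro rfl; rw [top_add] at h; exact absurd h (by simp)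
  lift x to ℕ using hx
  have : x + 1 = k := by exact_mod_cast h
  exact_mod_cast (by omega : x = k - 1)

lemma hcast {k : ℕ} (hk : 1 ≤ k) : ((k - 1 : ℕ) : ℕ∞) + 1 = (k : ℕ∞) := by
  have : (k - 1) + 1 = k := by omega
  exact_mod_cast congrArg (Nat.cast : ℕ → ℕ∞) this

end BowtieAux

namespace BowtieAux

open Sum

variable {V : Type} {G : SimpleGraph V} {u : V} {k : ℕ}

lemma badj_ll {a b : V} : (bowtieClique G u k).Adj (inl a) (inl b) ↔ G.Adj a b := Iff.rfl
lemma badj_lr {a : V} {i : Fin (k-1)} : (bowtieClique G u k).Adj (inl a) (inr i) ↔ a = u := Iff.rfl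
lemma badj_rl {b : V} {i : Fin (k-1)} : (bowtieClique G u k).Adj (inr i) (inl b) ↔ b = u := Iff.rfl
lemma badj_rr {i j : Fin (k-1)} : (bowtieClique G u k).Adj (inr i) (inr j) ↔ i ≠ j := Iff.rfl

lemma bowtie_edge_cases {e : Sym2 (V ⊕ Fin (k-1))} (he : e ∈ (bowtieClique G u k).edgeSet) :
    (∃ a b, G.Adj a b ∧ e = s(inl a, inl b)) ∨
    (∃ i, e = s(Sum.inl u, Sum.inr i)) ∨
    (∃ i j, i ≠ j ∧ e = s(Sum.inr i, Sum.inr j)) := by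
  induction e using Sym2.ind with
  | _ x y =>
    rw [SimpleGraph.mem_edgeSet] at he
    match x, y with
    | inl a, inl b => exact Or.inl ⟨a, b, he, rfl⟩
    | inl a, inr i =>
      have : a = u := he
      exact Or.inr (Or.inl ⟨i, by rw [this]⟩)
    | inr i, inl b =>
      have : b = u := he
      exact Or.inr (Or.inl ⟨i, by rw [this, Sym2.eq_swap]⟩)
    | inr i, inr j => exact Or.inr (Or.inr ⟨i, j, he, rfl⟩)

lemma master {n : ℕ} {Ev : Set (Sym2 V)} {Fw : Set (Sym2 (V ⊕ Fin (k-1)))}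
    (c : (G.deleteEdges Ev).Coloring (Fin n)) (d : Fin (k-1) → Fin n)
    (H1 : ∀ a b : V, s(a, b) ∈ Ev → s(Sum.inl a, Sum.inl b) ∈ Fw)
    (H2 : ∀ i, s(Sum.inl u, Sum.inr i) ∉ Fw → d i ≠ c u)
    (H3 : ∀ i j, i ≠ j → s(Sum.inr i, Sum.inr j) ∉ Fw → d i ≠ d j) :
    ((bowtieClique G u k).deleteEdges Fw).Colorable n := by
  refine ⟨SimpleGraph.Coloring.mk (Sum.elim (fun v => c v) d) ?_⟩
  rintro (a | i) (b | j) hadj <;>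
    rw [SimpleGraph.deleteEdges_adj] at hadj <;> obtain ⟨hadj, hne⟩ := hadj
  · exact c.valid (SimpleGraph.deleteEdges_adj.2 ⟨hadj, fun hm => hne (H1 a b hm)⟩)
  · have ha : a = u := hadj
    subst ha
    exact fun hcol => (H2 j hne) hcol.symm
  · have hb : b = u := hadj
    subst hb
    rw [Sym2.eq_swap] at hne
    exact H2 i hne
  · exact H3 i j hadj hne

lemma exists_fun_ne {n m : ℕ} (c0 : Fin n) (h : m ≤ n - 1) :
    ∃ d : Fin m → Fin n, Function.Injective d ∧ ∀ i, d i ≠ c0 := by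
  have hcard : Fintype.card (Fin m) ≤ Fintype.card {x : Fin n // x ≠ c0} := by
    have h1 : Fintype.card {x : Fin n // x ≠ c0} = n - 1 := by
      simp [Fintype.card_subtype_compl]
    simp [h1, h]
  obtain ⟨f⟩ := Function.Embedding.nonempty_of_card_le hcard
  exact ⟨fun i => (f i).1, fun a b hab => f.injective (Subtype.ext hab), fun i => (f i).2⟩

lemma exists_fun_avoid {n m : ℕ} (j₀ : Fin m) (c0 : Fin n) (h : m - 1 ≤ n - 1) :
    ∃ d : {j : Fin m // j ≠ j₀} → Fin n, Function.Injective d ∧ ∀ i, d i ≠ c0 := by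
  have hcard : Fintype.card {j : Fin m // j ≠ j₀} ≤ Fintype.card {x : Fin n // x ≠ c0} := by
    have h1 : Fintype.card {x : Fin n // x ≠ c0} = n - 1 := by
      simp [Fintype.card_subtype_compl]
    have h2 : Fintype.card {j : Fin m // j ≠ j₀} = m - 1 := by
      simp [Fintype.card_subtype_compl]
    simp [h1, h2, h]
  obtain ⟨f⟩ := Function.Embedding.nonempty_of_card_le hcard
  exact ⟨fun i => (f i).1, fun a b hab => f.injective (Subtype.ext hab), fun i => (f i).2⟩

/-- coloring the bowtie when no clique edge is deleted, with `k ≤ n` colors -/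
lemma corA (hk : 3 ≤ k) {n : ℕ} (hn : k ≤ n) {Ev : Set (Sym2 V)}
    {Fw : Set (Sym2 (V ⊕ Fin (k-1)))}
    (hc : (G.deleteEdges Ev).Colorable n)
    (H1 : ∀ a b : V, s(a, b) ∈ Ev → s(Sum.inl a, Sum.inl b) ∈ Fw) :
    ((bowtieClique G u k).deleteEdges Fw).Colorable n := by
  obtain ⟨c⟩ := hc
  obtain ⟨d, hdinj, hdne⟩ := exists_fun_ne (c u) (show k - 1 ≤ n - 1 by omega)
  exact master c d H1 (fun i _ => hdne i) (fun i j hij _ hd => hij (hdinj hd))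

/-- coloring the bowtie when an edge `u -- inr i₀` is deleted, with `k-1 ≤ n` colors -/
lemma corB1 (hk : 3 ≤ k) {n : ℕ} (hn : k - 1 ≤ n) {Ev : Set (Sym2 V)}
    {Fw : Set (Sym2 (V ⊕ Fin (k-1)))} {i₀ : Fin (k-1)}
    (hf : s(Sum.inl u, Sum.inr i₀) ∈ Fw)
    (hc : (G.deleteEdges Ev).Colorable n)
    (H1 : ∀ a b : V, s(a, b) ∈ Ev → s(Sum.inl a, Sum.inl b) ∈ Fw) :
    ((bowtieClique G u k).deleteEdges Fw).Colorable n := by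
  classical
  obtain ⟨c⟩ := hc
  obtain ⟨g, hginj, hgne⟩ := exists_fun_avoid i₀ (c u) (show (k-1) - 1 ≤ n - 1 by omega)
  refine master c (fun j => if h : j = i₀ then c u else g ⟨j, h⟩) ?_ ?_ ?_
  · exact H1
  · intro i hni
    split_ifs with h
    · exact absurd hf (h ▸ hni)
    · exact hgne _
  · intro i j hij _
    split_ifs with h1 h2 h2
    · exact absurd (h1.trans h2.symm) hij
    · exact fun hcol => (hgne _) hcol.symm
    · exact hgne _
    · exact fun hcol => hij (Subtype.mk_eq_mk.1 (hginj hcol))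

/-- coloring the bowtie when an edge `inr i₀ -- inr j₀` is deleted, with `k-1 ≤ n` colors -/
lemma corB2 (hk : 3 ≤ k) {n : ℕ} (hn : k - 1 ≤ n) {Ev : Set (Sym2 V)}
    {Fw : Set (Sym2 (V ⊕ Fin (k-1)))} {i₀ j₀ : Fin (k-1)} (hij₀ : i₀ ≠ j₀)
    (hf : s(Sum.inr i₀, Sum.inr j₀) ∈ Fw)
    (hc : (G.deleteEdges Ev).Colorable n)
    (H1 : ∀ a b : V, s(a, b) ∈ Ev → s(Sum.inl a, Sum.inl b) ∈ Fw) :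
    ((bowtieClique G u k).deleteEdges Fw).Colorable n := by
  classical
  obtain ⟨c⟩ := hc
  obtain ⟨g, hginj, hgne⟩ := exists_fun_avoid j₀ (c u) (show (k-1) - 1 ≤ n - 1 by omega)
  refine master c (fun j => if h : j = j₀ then g ⟨i₀, hij₀⟩ else g ⟨j, h⟩) ?_ ?_ ?_
  · exact H1
  · intro i _
    split_ifs with h <;> exact hgne _
  · intro i j hij hne
    split_ifs with h1 h2 h2
    · exact absurd (h1.trans h2.symm) hij
    · intro hcol
      have hji : i₀ = j := Subtype.mk_eq_mk.1 (hginj hcol)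
      apply hne
      rw [h1, ← hji, Sym2.eq_swap]
      exact hf
    · intro hcol
      have hii : i = i₀ := Subtype.mk_eq_mk.1 (hginj hcol)
      apply hne
      rw [hii, h2]
      exact hf
    · exact fun hcol => hij (Subtype.mk_eq_mk.1 (hginj hcol))

/-- transfer a coloring of the (deleted) bowtie back to `G` -/
lemma colorable_G_of_bowtie {n : ℕ} {Ev : Set (Sym2 V)} {Fw : Set (Sym2 (V ⊕ Fin (k-1)))}
    (H1 : ∀ a b : V, G.Adj a b → s(Sum.inl a, Sum.inl b) ∈ Fw → s(a, b) ∈ Ev)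
    (hc : ((bowtieClique G u k).deleteEdges Fw).Colorable n) :
    (G.deleteEdges Ev).Colorable n := by
  obtain ⟨c⟩ := hc
  refine ⟨SimpleGraph.Coloring.mk (fun v => c (inl v)) ?_⟩
  intro a b hab
  rw [SimpleGraph.deleteEdges_adj] at hab
  exact c.valid (SimpleGraph.deleteEdges_adj.2 ⟨hab.1, fun hm => hab.2 (H1 a b hab.1 hm)⟩)

/-- the clique lower bound when no clique edge is deleted -/
lemma clique_bound (hk : 3 ≤ k) {Fw : Set (Sym2 (V ⊕ Fin (k-1)))} {n : ℕ}
    (hFu : ∀ i : Fin (k-1), s(Sum.inl u, Sum.inr i) ∉ Fw)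
    (hFr : ∀ i j : Fin (k-1), s(Sum.inr i, Sum.inr j) ∉ Fw)
    (hc : ((bowtieClique G u k).deleteEdges Fw).Colorable n) : k ≤ n := by
  obtain ⟨c⟩ := hc
  have hinj : Function.Injective
      (fun o : Option (Fin (k-1)) => c (o.elim (Sum.inl u) Sum.inr)) := by
    intro o₁ o₂ hcol
    match o₁, o₂ with
    | none, none => rfl
    | none, some i =>
      exact absurd hcol (c.valid (SimpleGraph.deleteEdges_adj.2 ⟨rfl, hFu i⟩))
    | some i, none =>
      exact absurd hcol (c.valid (SimpleGraph.deleteEdges_adj.2 ⟨rfl, by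
        rw [Sym2.eq_swap]; exact hFu i⟩))
    | some i, some j =>
      rcases eq_or_ne i j with rfl | hij
      · rfl
      · exact absurd hcol (c.valid (SimpleGraph.deleteEdges_adj.2 ⟨hij, hFr i j⟩))
  have := Fintype.card_le_of_injective _ hinj
  simpa [Fintype.card_option, show k - 1 + 1 = k by omega] using this

end BowtieAux

namespace BowtieAux

open Sum SimpleGraph

lemma enat_k_succ_ne (k : ℕ) : ¬((k : ℕ∞) + 1 = (k : ℕ∞)) := by
  intro h
  have h2 : ((k + 1 : ℕ) : ℕ∞) = ((k : ℕ) : ℕ∞) := by exact_mod_cast h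
  exact absurd (Nat.cast_inj.1 h2) (by omega)

lemma le_of_add_one_le {x : ℕ∞} {k : ℕ} (hk : 1 ≤ k) (h : (k : ℕ∞) ≤ x + 1) :
    ((k - 1 : ℕ) : ℕ∞) ≤ x := by
  cases x with
  | top => exact le_top
  | coe m =>
    have : k ≤ m + 1 := by exact_mod_cast h
    exact_mod_cast (by omega : k - 1 ≤ m)

variable {V : Type} [Fintype V] {G : SimpleGraph V} {u : V} {k : ℕ}

lemma chrom_del_noK (hk : 3 ≤ k)
    (hχB : (bowtieClique G u k).chromaticNumber = (k : ℕ∞))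
    {Fw : Set (Sym2 (V ⊕ Fin (k-1)))}
    (hFu : ∀ i : Fin (k-1), s(Sum.inl u, Sum.inr i) ∉ Fw)
    (hFr : ∀ i j : Fin (k-1), s(Sum.inr i, Sum.inr j) ∉ Fw) :
    ((bowtieClique G u k).deleteEdges Fw).chromaticNumber = (k : ℕ∞) := by
  refine le_antisymm ?_ ?_
  · rw [← hχB]
    exact chromaticNumber_mono _ (deleteEdges_le Fw)
  · exact le_chrom_of_forall _ k (fun n hc => clique_bound hk hFu hFr hc)

lemma chrom_del_noG (hk : 3 ≤ k)
    (hχG : G.chromaticNumber = (k : ℕ∞))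
    (hχB : (bowtieClique G u k).chromaticNumber = (k : ℕ∞))
    {Fw : Set (Sym2 (V ⊕ Fin (k-1)))}
    (hno : ∀ a b : V, s(Sum.inl a, Sum.inl b) ∉ Fw) :
    ((bowtieClique G u k).deleteEdges Fw).chromaticNumber = (k : ℕ∞) := by
  refine le_antisymm ?_ ?_
  · rw [← hχB]
    exact chromaticNumber_mono _ (deleteEdges_le Fw)
  · rw [← hχG]
    refine chromaticNumber_le_of_forall_imp (fun n hc => ?_)
    have := colorable_G_of_bowtie (Ev := (∅ : Set (Sym2 V)))
      (fun a b _ hm => absurd hm (hno a b)) hc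
    rwa [deleteEdges_empty] at this

lemma chrom_del_pred (hk : 3 ≤ k) {a₀ b₀ : V} (hadj : G.Adj a₀ b₀)
    (hG : (G.deleteEdges {s(a₀, b₀)}).chromaticNumber = ((k - 1 : ℕ) : ℕ∞))
    {Fw : Set (Sym2 (V ⊕ Fin (k-1)))}
    (W1 : ∀ a b : V, s(Sum.inl a, Sum.inl b) ∈ Fw ↔ s(a, b) = s(a₀, b₀))
    (W2 : (∃ i, s(Sum.inl u, Sum.inr i) ∈ Fw) ∨
      (∃ i j, i ≠ j ∧ s(Sum.inr i, Sum.inr j) ∈ Fw)) :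
    ((bowtieClique G u k).deleteEdges Fw).chromaticNumber = ((k - 1 : ℕ) : ℕ∞) := by
  refine le_antisymm ?_ ?_
  · rw [chromaticNumber_le_iff_colorable]
    have hc : (G.deleteEdges {s(a₀, b₀)}).Colorable (k - 1) := by
      rw [← chromaticNumber_le_iff_colorable, hG]
    have H1 : ∀ a b : V, s(a, b) ∈ ({s(a₀, b₀)} : Set (Sym2 V)) →
        s(Sum.inl a, Sum.inl b) ∈ Fw := by
      intro a b hm
      exact (W1 a b).2 (Set.mem_singleton_iff.1 hm)
    rcases W2 with ⟨i, hi⟩ | ⟨i, j, hij, hf⟩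
    · exact corB1 hk le_rfl hi hc H1
    · exact corB2 hk le_rfl hij hf hc H1
  · rw [← hG]
    refine chromaticNumber_le_of_forall_imp (fun n hc => ?_)
    exact colorable_G_of_bowtie
      (fun a b _ hm => Set.mem_singleton_iff.2 ((W1 a b).1 hm)) hc

lemma W1_pairA {a₀ b₀ : V} {f : Sym2 (V ⊕ Fin (k-1))}
    (hf : ∀ a b : V, f ≠ s(Sum.inl a, Sum.inl b)) (a b : V) :
    s(Sum.inl a, Sum.inl b) ∈ ({s(Sum.inl a₀, Sum.inl b₀), f} :
      Set (Sym2 (V ⊕ Fin (k-1)))) ↔ s(a, b) = s(a₀, b₀) := by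
  constructor
  · intro h
    rcases Set.mem_insert_iff.1 h with h | h
    · rw [Sym2.eq_iff] at h ⊢
      rcases h with ⟨h1, h2⟩ | ⟨h1, h2⟩
      · exact Or.inl ⟨inl_injective h1, inl_injective h2⟩
      · exact Or.inr ⟨inl_injective h1, inl_injective h2⟩
    · exact absurd (Set.mem_singleton_iff.1 h).symm (hf a b)
  · intro h
    refine Set.mem_insert_iff.2 (Or.inl ?_)
    have h2 := congrArg (Sym2.map (Sum.inl : V → V ⊕ Fin (k-1))) h
    rwa [Sym2.map_pair_eq, Sym2.map_pair_eq] at h2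

lemma W1_pairB {a₀ b₀ : V} {f : Sym2 (V ⊕ Fin (k-1))}
    (hf : ∀ a b : V, f ≠ s(Sum.inl a, Sum.inl b)) (a b : V) :
    s(Sum.inl a, Sum.inl b) ∈ ({f, s(Sum.inl a₀, Sum.inl b₀)} :
      Set (Sym2 (V ⊕ Fin (k-1)))) ↔ s(a, b) = s(a₀, b₀) := by
  rw [Set.pair_comm]
  exact W1_pairA hf a b

lemma not_one_lt_of_no_edges {W : Type} {H : SimpleGraph W} (hempty : H.edgeSet = ∅) :
    ¬(1 < H.chromaticNumber) := by
  have hbot : H = ⊥ := edgeSet_eq_empty.1 hempty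
  subst hbot
  have hcol : (⊥ : SimpleGraph W).Colorable 1 :=
    ⟨Coloring.mk (fun _ => 0) (fun {v w} h => absurd h (by simp))⟩
  have := hcol.chromaticNumber_le
  intro h1
  rw [Nat.cast_one] at this
  exact absurd h1 (not_lt.2 this)

lemma exists_drop_aux {W : Type} [Fintype W] :
    ∀ (N : ℕ) (H : SimpleGraph W), (H.edgeSet.toFinite.toFinset).card ≤ N →
      1 < H.chromaticNumber →
      ∃ F : Finset (Sym2 W), ↑F ⊆ H.edgeSet ∧
        (H.deleteEdges ↑F).chromaticNumber + 1 = H.chromaticNumber := by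
  classical
  intro N
  induction N with
  | zero =>
    intro H hN h1
    exfalso
    have hempty : H.edgeSet = ∅ := by
      have := Finset.card_eq_zero.1 (Nat.le_zero.1 hN)
      rwa [Set.Finite.toFinset_eq_empty] at this
    exact not_one_lt_of_no_edges hempty h1
  | succ N ih =>
    intro H hN h1
    rcases Set.eq_empty_or_nonempty H.edgeSet with hempty | ⟨e, he⟩
    · exact absurd h1 (not_one_lt_of_no_edges hempty)
    · set H' := H.deleteEdges {e} with hH'
      have hsub : H'.edgeSet = H.edgeSet \ {e} := edgeSet_deleteEdges _
      have hlt : (H'.edgeSet.toFinite.toFinset).card < (H.edgeSet.toFinite.toFinset).card := by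
        apply Finset.card_lt_card
        rw [Set.Finite.toFinset_ssubset_toFinset, hsub]
        exact Set.sdiff_singleton_ssubset.2 he
      have hle : H.chromaticNumber ≤ H'.chromaticNumber + 1 := chrom_le_del_add_one H e
      have hge : H'.chromaticNumber ≤ H.chromaticNumber :=
        chromaticNumber_mono _ (deleteEdges_le _)
      by_cases heq : H'.chromaticNumber + 1 = H.chromaticNumber
      · refine ⟨{e}, ?_, ?_⟩
        · rw [Finset.coe_singleton]
          exact Set.singleton_subset_iff.2 he
        · rw [Finset.coe_singleton]
          exact heq
      · have heq2 : H'.chromaticNumber = H.chromaticNumber := by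
          refine le_antisymm hge ?_
          have hlt2 : H.chromaticNumber < H'.chromaticNumber + 1 :=
            lt_of_le_of_ne hle (fun hh => heq hh.symm)
          exact (ENat.lt_add_one_iff (chrom_ne_top H')).1 hlt2
        have h1' : 1 < H'.chromaticNumber := by rw [heq2]; exact h1
        obtain ⟨F', hF'sub, hF'eq⟩ := ih H' (by omega) h1'
        refine ⟨insert e F', ?_, ?_⟩
        · intro f hf
          rcases Finset.mem_coe.1 hf with hf'
          rcases Finset.mem_insert.1 hf' with rfl | hmem
          · exact he
          · have := hF'sub (Finset.mem_coe.2 hmem)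
            rw [hsub] at this
            exact this.1
        · have hrw : H.deleteEdges ↑(insert e F') = H'.deleteEdges ↑F' := by
            rw [hH', deleteEdges_deleteEdges]
            congr 1
            rw [Finset.coe_insert]
            exact Set.singleton_union.symm
          rw [hrw, hF'eq, heq2]

lemma exists_drop {W : Type} [Fintype W] (H : SimpleGraph W) (h1 : 1 < H.chromaticNumber) :
    ∃ F : Finset (Sym2 W), ↑F ⊆ H.edgeSet ∧
      (H.deleteEdges ↑F).chromaticNumber + 1 = H.chromaticNumber :=
  exists_drop_aux _ H le_rfl h1

end BowtieAux


open Sum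

/-- Theorem 3.1: for `k ≥ 3`, a graph `G` (without isolated vertices) satisfies `χ(G) = k`
and is critical for the chromatic number if and only if `G_u ⋈ K_k` is `(k,2)`-critical. -/
theorem critical_iff_bowtie_critical {V : Type} [Fintype V] (G : SimpleGraph V) (u : V)
    (k : ℕ) (hk : 3 ≤ k) (hiso : ∀ v : V, ∃ w : V, G.Adj v w) :
    (G.chromaticNumber = (k : ℕ∞) ∧
      ∀ e ∈ G.edgeSet, (G.deleteEdges {e}).chromaticNumber + 1 = (k : ℕ∞)) ↔
    IsKLCritical (bowtieClique G u k) k 2 := by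
  classical
  have hk1 : ((k - 1 : ℕ) : ℕ∞) + 1 = (k : ℕ∞) := BowtieAux.hcast (by omega)
  obtain ⟨w₀, hw₀⟩ := hiso u
  set i0 : Fin (k-1) := ⟨0, by omega⟩ with hi0
  set i1 : Fin (k-1) := ⟨1, by omega⟩ with hi1
  have hi01 : i0 ≠ i1 := by simp [hi0, hi1, Fin.ext_iff]
  constructor
  · rintro ⟨hχG, hcrit⟩
    have hGdel : ∀ e ∈ G.edgeSet,
        (G.deleteEdges {e}).chromaticNumber = ((k - 1 : ℕ) : ℕ∞) :=
      fun e he => BowtieAux.enat_cancel (by omega) (hcrit e he)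
    -- χ(B) = k
    have hχB : (bowtieClique G u k).chromaticNumber = (k : ℕ∞) := by
      refine le_antisymm ?_ ?_
      · have hc : G.Colorable k := by rw [← chromaticNumber_le_iff_colorable, hχG]
        have hcB := BowtieAux.corA (G := G) (u := u) hk le_rfl
          (Ev := (∅ : Set (Sym2 V))) (Fw := (∅ : Set (Sym2 (V ⊕ Fin (k-1)))))
          (by rwa [deleteEdges_empty]) (fun a b h => absurd h (Set.notMem_empty _))
        rw [deleteEdges_empty] at hcB
        exact hcB.chromaticNumber_le
      · refine BowtieAux.le_chrom_of_forall _ k (fun n hc => ?_)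
        exact BowtieAux.clique_bound hk (fun i => Set.notMem_empty _)
          (fun i j => Set.notMem_empty _) (by rwa [deleteEdges_empty])
    -- 2 is achievable
    have h2mem : 2 ∈ {n : ℕ | ∃ F : Finset (Sym2 (V ⊕ Fin (k-1))),
        ↑F ⊆ (bowtieClique G u k).edgeSet ∧ F.card = n ∧
        ((bowtieClique G u k).deleteEdges ↑F).chromaticNumber + 1 =
          (bowtieClique G u k).chromaticNumber} := by
      refine ⟨{s(inl u, inl w₀), s(inr i0, inr i1)}, ?_, ?_, ?_⟩
      · intro f hf
        rcases Finset.mem_insert.1 (Finset.mem_coe.1 hf) with rfl | hf'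
        · exact hw₀
        · rw [Finset.mem_singleton] at hf'
          subst hf'
          exact hi01
      · rw [Finset.card_insert_of_notMem (by simp [Sym2.eq_iff]), Finset.card_singleton]
      · have hcoe : (↑({s(inl u, inl w₀), s(inr i0, inr i1)} :
            Finset (Sym2 (V ⊕ Fin (k-1)))) : Set (Sym2 (V ⊕ Fin (k-1)))) =
            {s(inl u, inl w₀), s(inr i0, inr i1)} := by simp
        rw [hcoe, hχB,
          BowtieAux.chrom_del_pred hk hw₀ (hGdel _ hw₀)
            (BowtieAux.W1_pairA (by intro a b; simp [Sym2.eq_iff]))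
            (Or.inr ⟨i0, i1, hi01, Set.mem_insert_iff.2 (Or.inr rfl)⟩), hk1]
    -- nothing smaller works
    have hlow : ∀ m ∈ {n : ℕ | ∃ F : Finset (Sym2 (V ⊕ Fin (k-1))),
        ↑F ⊆ (bowtieClique G u k).edgeSet ∧ F.card = n ∧
        ((bowtieClique G u k).deleteEdges ↑F).chromaticNumber + 1 =
          (bowtieClique G u k).chromaticNumber}, 2 ≤ m := by
      rintro m ⟨F, hFsub, hFcard, hFeq⟩
      by_contra hlt
      push_neg at hlt
      interval_cases m
      · obtain rfl := Finset.card_eq_zero.1 hFcard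
        rw [Finset.coe_empty, deleteEdges_empty, hχB] at hFeq
        exact BowtieAux.enat_k_succ_ne k hFeq
      · obtain ⟨f, rfl⟩ := Finset.card_eq_one.1 hFcard
        have hfe : f ∈ (bowtieClique G u k).edgeSet := by
          apply hFsub
          simp
        rw [Finset.coe_singleton, hχB] at hFeq
        rcases BowtieAux.bowtie_edge_cases hfe with ⟨a, b, hab, rfl⟩ | ⟨i, rfl⟩ |
          ⟨i, j, hij, rfl⟩
        · rw [BowtieAux.chrom_del_noK hk hχB
            (by intro i; simp [Sym2.eq_iff]) (by intro i j; simp [Sym2.eq_iff])] at hFeq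
          exact BowtieAux.enat_k_succ_ne k hFeq
        · rw [BowtieAux.chrom_del_noG hk hχG hχB
            (by intro a b; simp [Sym2.eq_iff])] at hFeq
          exact BowtieAux.enat_k_succ_ne k hFeq
        · rw [BowtieAux.chrom_del_noG hk hχG hχB
            (by intro a b; simp [Sym2.eq_iff])] at hFeq
          exact BowtieAux.enat_k_succ_ne k hFeq
    have hes2 : esChi (bowtieClique G u k) = 2 :=
      le_antisymm (Nat.sInf_le h2mem) (hlow _ (Nat.sInf_mem ⟨2, h2mem⟩))
    refine ⟨?_, hχB, hes2⟩
    -- edge-stability criticality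
    intro e he
    rw [hes2]
    have key : ∀ (f : Sym2 (V ⊕ Fin (k-1))), f ∈ ((bowtieClique G u k).deleteEdges {e}).edgeSet →
        (((bowtieClique G u k).deleteEdges {e}).deleteEdges {f}).chromaticNumber + 1 =
          ((bowtieClique G u k).deleteEdges {e}).chromaticNumber →
        esChi ((bowtieClique G u k).deleteEdges {e}) < 2 := by
      intro f hf heq
      have h1mem : 1 ∈ {n : ℕ | ∃ F : Finset (Sym2 (V ⊕ Fin (k-1))),
          ↑F ⊆ ((bowtieClique G u k).deleteEdges {e}).edgeSet ∧ F.card = n ∧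
          (((bowtieClique G u k).deleteEdges {e}).deleteEdges ↑F).chromaticNumber + 1 =
            ((bowtieClique G u k).deleteEdges {e}).chromaticNumber} := by
        refine ⟨{f}, ?_, Finset.card_singleton f, ?_⟩
        · rw [Finset.coe_singleton]
          exact Set.singleton_subset_iff.2 hf
        · rw [Finset.coe_singleton]
          exact heq
      exact lt_of_le_of_lt (Nat.sInf_le h1mem) one_lt_two
    rcases BowtieAux.bowtie_edge_cases he with ⟨a, b, hab, rfl⟩ | ⟨i, rfl⟩ | ⟨i, j, hij, rfl⟩
    · -- e is a G-edge; delete a clique edge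
      refine key s(inr i0, inr i1) ?_ ?_
      · rw [edgeSet_deleteEdges]
        exact ⟨hi01, by simp [Sym2.eq_iff]⟩
      · rw [deleteEdges_deleteEdges, Set.singleton_union,
          BowtieAux.chrom_del_noK (Fw := {s(inl a, inl b)}) hk hχB
            (by intro i; simp [Sym2.eq_iff]) (by intro i' j'; simp [Sym2.eq_iff]),
          BowtieAux.chrom_del_pred hk hab (hGdel _ hab)
            (BowtieAux.W1_pairA (by intro a' b'; simp [Sym2.eq_iff]))
            (Or.inr ⟨i0, i1, hi01, Set.mem_insert_iff.2 (Or.inr rfl)⟩), hk1]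
    · -- e = s(inl u, inr i); delete a G-edge
      refine key s(inl u, inl w₀) ?_ ?_
      · rw [edgeSet_deleteEdges]
        exact ⟨hw₀, by simp [Sym2.eq_iff]⟩
      · rw [deleteEdges_deleteEdges, Set.singleton_union,
          BowtieAux.chrom_del_noG (Fw := {s(inl u, inr i)}) hk hχG hχB
            (by intro a' b'; simp [Sym2.eq_iff]),
          BowtieAux.chrom_del_pred hk hw₀ (hGdel _ hw₀)
            (BowtieAux.W1_pairB (by intro a' b'; simp [Sym2.eq_iff]))
            (Or.inl ⟨i, Set.mem_insert _ _⟩), hk1]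
    · -- e = s(inr i, inr j); delete a G-edge
      refine key s(inl u, inl w₀) ?_ ?_
      · rw [edgeSet_deleteEdges]
        exact ⟨hw₀, by simp [Sym2.eq_iff]⟩
      · rw [deleteEdges_deleteEdges, Set.singleton_union,
          BowtieAux.chrom_del_noG (Fw := {s(inr i, inr j)}) hk hχG hχB
            (by intro a' b'; simp [Sym2.eq_iff]),
          BowtieAux.chrom_del_pred hk hw₀ (hGdel _ hw₀)
            (BowtieAux.W1_pairB (by intro a' b'; simp [Sym2.eq_iff]))
            (Or.inr ⟨i, j, hij, Set.mem_insert _ _⟩), hk1]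
  · rintro ⟨hcrit, hχB, hes2⟩
    have hcolG : ∀ n, (bowtieClique G u k).Colorable n → G.Colorable n := by
      intro n hc
      have := BowtieAux.colorable_G_of_bowtie (Ev := (∅ : Set (Sym2 V)))
        (Fw := (∅ : Set (Sym2 (V ⊕ Fin (k-1)))))
        (fun a b _ h => absurd h (Set.notMem_empty _)) (by rwa [deleteEdges_empty])
      rwa [deleteEdges_empty] at this
    have hχGle : G.chromaticNumber ≤ (k : ℕ∞) := by
      rw [← hχB]
      exact chromaticNumber_le_of_forall_imp hcolG
    have hχG : G.chromaticNumber = (k : ℕ∞) := by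
      refine le_antisymm hχGle ?_
      by_contra hlt
      push_neg at hlt
      have hcol : G.Colorable (k - 1) := by
        have hne := BowtieAux.chrom_ne_top G
        have hco : ((ENat.toNat G.chromaticNumber : ℕ) : ℕ∞) = G.chromaticNumber :=
          ENat.coe_toNat hne
        rw [← hco] at hlt
        have hmk : ENat.toNat G.chromaticNumber < k := by exact_mod_cast hlt
        exact (G.colorable_chromaticNumber_of_fintype).mono (by omega)
      have h1mem : 1 ∈ {n : ℕ | ∃ F : Finset (Sym2 (V ⊕ Fin (k-1))),
          ↑F ⊆ (bowtieClique G u k).edgeSet ∧ F.card = n ∧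
          ((bowtieClique G u k).deleteEdges ↑F).chromaticNumber + 1 =
            (bowtieClique G u k).chromaticNumber} := by
        refine ⟨{s(inr i0, inr i1)}, ?_, Finset.card_singleton _, ?_⟩
        · rw [Finset.coe_singleton]
          exact Set.singleton_subset_iff.2 hi01
        · rw [Finset.coe_singleton]
          have hup : ((bowtieClique G u k).deleteEdges
              {s(inr i0, inr i1)}).chromaticNumber ≤ ((k - 1 : ℕ) : ℕ∞) := by
            rw [chromaticNumber_le_iff_colorable]
            exact BowtieAux.corB2 hk le_rfl hi01 (Set.mem_singleton _)
              (Ev := (∅ : Set (Sym2 V))) (by rwa [deleteEdges_empty])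
              (fun a b h => absurd h (Set.notMem_empty _))
          have hdown : ((k - 1 : ℕ) : ℕ∞) ≤ ((bowtieClique G u k).deleteEdges
              {s(inr i0, inr i1)}).chromaticNumber := by
            refine BowtieAux.le_of_add_one_le (by omega) ?_
            rw [← hχB]
            exact BowtieAux.chrom_le_del_add_one _ _
          rw [le_antisymm hup hdown, hk1, hχB]
      have := Nat.sInf_le h1mem
      rw [show sInf _ = esChi (bowtieClique G u k) from rfl, hes2] at this
      omega
    refine ⟨hχG, ?_⟩
    intro e he
    revert he
    induction e using Sym2.ind with
    | _ a b =>
    intro he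
    have hab : G.Adj a b := he
    have he' : s(inl a, inl b) ∈ (bowtieClique G u k).edgeSet := hab
    have hlt := hcrit _ he'
    rw [hes2] at hlt
    have hχBe : ((bowtieClique G u k).deleteEdges {s(inl a, inl b)}).chromaticNumber
        = (k : ℕ∞) := BowtieAux.chrom_del_noK hk hχB
        (by intro i; simp [Sym2.eq_iff]) (by intro i j; simp [Sym2.eq_iff])
    obtain ⟨F₀, hF₀sub, hF₀eq⟩ := BowtieAux.exists_drop
      ((bowtieClique G u k).deleteEdges {s(inl a, inl b)})
      (by rw [hχBe]; exact_mod_cast (by omega : 1 < k))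
    have hSne : {n : ℕ | ∃ F : Finset (Sym2 (V ⊕ Fin (k-1))),
        ↑F ⊆ ((bowtieClique G u k).deleteEdges {s(inl a, inl b)}).edgeSet ∧ F.card = n ∧
        (((bowtieClique G u k).deleteEdges {s(inl a, inl b)}).deleteEdges ↑F).chromaticNumber
          + 1 = ((bowtieClique G u k).deleteEdges
            {s(inl a, inl b)}).chromaticNumber}.Nonempty :=
      ⟨F₀.card, F₀, hF₀sub, rfl, hF₀eq⟩
    obtain ⟨F, hFsub, hFcard, hFeq⟩ := Nat.sInf_mem hSne
    have hcard2 : F.card < 2 := by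
      rw [hFcard]
      exact hlt
    rw [hχBe] at hFeq
    have hupper : (G.deleteEdges {s(a, b)}).chromaticNumber ≤ ((k - 1 : ℕ) : ℕ∞) := by
      interval_cases hc : F.card
      · obtain rfl := Finset.card_eq_zero.1 hc
        rw [Finset.coe_empty, deleteEdges_empty, hχBe] at hFeq
        exact absurd hFeq (BowtieAux.enat_k_succ_ne k)
      · obtain ⟨f, rfl⟩ := Finset.card_eq_one.1 hc
        rw [Finset.coe_singleton, deleteEdges_deleteEdges, Set.singleton_union] at hFeq
        have hχ2 : ((bowtieClique G u k).deleteEdges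
            {s(inl a, inl b), f}).chromaticNumber = ((k - 1 : ℕ) : ℕ∞) :=
          BowtieAux.enat_cancel (by omega) hFeq
        have hfB : f ∈ (bowtieClique G u k).edgeSet := by
          have := hFsub (by simp : f ∈ (↑({f} : Finset (Sym2 (V ⊕ Fin (k-1)))) :
            Set (Sym2 (V ⊕ Fin (k-1)))))
          rw [edgeSet_deleteEdges] at this
          exact this.1
        rcases BowtieAux.bowtie_edge_cases hfB with ⟨a', b', hab', rfl⟩ | ⟨i, rfl⟩ |
          ⟨i, j, hij, rfl⟩
        · rw [BowtieAux.chrom_del_noK (Fw := {s(inl a, inl b), s(inl a', inl b')}) hk hχB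
            (by intro i; simp [Sym2.eq_iff]) (by intro i j; simp [Sym2.eq_iff])] at hχ2
          exfalso
          have : k = k - 1 := Nat.cast_inj.1 hχ2
          omega
        · rw [chromaticNumber_le_iff_colorable]
          refine BowtieAux.colorable_G_of_bowtie (Fw := {s(inl a, inl b), s(inl u, inr i)})
            ?_ (by rw [← chromaticNumber_le_iff_colorable, hχ2])
          intro a' b' _ hm
          exact Set.mem_singleton_iff.2
            ((BowtieAux.W1_pairA (by intro x y; simp [Sym2.eq_iff]) a' b').1 hm)
        · rw [chromaticNumber_le_iff_colorable]
          refine BowtieAux.colorable_G_of_bowtie (Fw := {s(inl a, inl b), s(inr i, inr j)})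
            ?_ (by rw [← chromaticNumber_le_iff_colorable, hχ2])
          intro a' b' _ hm
          exact Set.mem_singleton_iff.2
            ((BowtieAux.W1_pairA (by intro x y; simp [Sym2.eq_iff]) a' b').1 hm)
    have hlower : (k : ℕ∞) ≤ (G.deleteEdges {s(a, b)}).chromaticNumber + 1 := by
      rw [← hχG]
      exact BowtieAux.chrom_le_del_add_one _ _
    refine le_antisymm ?_ hlower
    calc (G.deleteEdges {s(a, b)}).chromaticNumber + 1
        ≤ ((k - 1 : ℕ) : ℕ∞) + 1 := add_le_add_left hupper 1
      _ = (k : ℕ∞) := hk1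
end

section
/- If a graph $G$ has exactly two odd cycles and these two odd cycles have a common edge, then $es_\chi(G)=1$. -/
open SimpleGraph

section Aux

variable {V : Type} {G : SimpleGraph V}

lemma isPath_first_edge {a b x : V} {q : G.Walk a b} (hq : q.IsPath)
    (he : s(a, x) ∈ q.edges) : ∃ (had : G.Adj a x) (r : G.Walk x b), q = Walk.cons had r := by
  cases q with
  | nil => simp at he
  | @cons _ c _ h r =>
    rw [Walk.edges_cons, List.mem_cons] at he
    rcases he with he | he
    · rw [Sym2.eq_iff] at he
      rcases he with ⟨-, rfl⟩ | ⟨rfl, rfl⟩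
      · exact ⟨h, r, rfl⟩
      · exact absurd rfl h.ne
    · exact absurd (r.fst_mem_support_of_mem_edges he)
        ((Walk.cons_isPath_iff h r).mp hq).2

lemma exists_odd_cycle_aux :
    ∀ (n : ℕ) {u : V} (w : G.Walk u u), w.length ≤ n → Odd w.length →
      ∃ (v : V) (c : G.Walk v v), c.IsCycle ∧ Odd c.length := by
  classical
  intro n
  induction n with
  | zero =>
    intro u w hl hodd
    interval_cases h : w.length
    · simp at hodd
  | succ n ih =>
    intro u w hl hodd
    cases w with
    | nil => simp at hodd
    | @cons _ v _ h p =>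
      by_cases hnd : p.support.Nodup
      · -- p is a path; show `cons h p` is a cycle, unless the edge repeats
        have hp : p.IsPath := (Walk.isPath_def p).mpr hnd
        by_cases he : s(u, v) ∈ p.edges
        · exfalso
          have hq : p.reverse.IsPath := hp.reverse
          have he' : s(u, v) ∈ p.reverse.edges := by
            rwa [Walk.edges_reverse, List.mem_reverse]
          obtain ⟨had, r, hqe⟩ := isPath_first_edge hq he'
          have hr : r.IsPath := by
            rw [hqe] at hq
            exact ((Walk.cons_isPath_iff had r).mp hq).1
          have hrnil : r.length = 0 := by
            cases r with
            | nil => rfl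
            | cons h' r' =>
              exact absurd ((Walk.cons_isPath_iff h' r').mp hr).2
                (not_not.mpr r'.end_mem_support)
          have hplen : p.length = 1 := by
            have := congrArg Walk.length hqe
            simp only [Walk.length_reverse, Walk.length_cons, hrnil] at this
            omega
          rw [Walk.length_cons, hplen] at hodd
          simp [Nat.odd_iff] at hodd
        · exact ⟨u, Walk.cons h p, (Walk.cons_isCycle_iff p h).mpr ⟨hp, he⟩, hodd⟩
      · -- a vertex repeats in p.support: split the closed walk in two
        obtain ⟨x, hx2⟩ : ∃ x, 2 ≤ p.support.count x := by
          by_contra hcon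
          push_neg at hcon
          exact hnd (List.nodup_iff_count_le_one.mpr fun a => by have := hcon a; omega)
        have hxp : x ∈ p.support := by
          rw [← List.count_pos_iff]; omega
        set t := p.takeUntil x hxp with ht
        set d := p.dropUntil x hxp with hd
        have hspec : t.append d = p := p.take_spec hxp
        have hcount_t : t.support.count x = 1 := p.count_support_takeUntil_eq_one hxp
        have hxd : x ∈ d.support.tail := by
          rw [← List.count_pos_iff]
          have : p.support.count x = t.support.count x + d.support.tail.count x := by
            rw [← hspec, Walk.support_append, List.count_append]
          omega
        cases hdd : d with
        | nil => rw [hdd] at hxd; simp at hxd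
        | @cons _ y _ h₂ q =>
          have hxq : x ∈ q.support := by
            rw [hdd] at hxd; simpa using hxd
          set t₂ := q.takeUntil x hxq with ht₂
          set d₂ := q.dropUntil x hxq with hd₂
          have hspec2 : t₂.append d₂ = q := q.take_spec hxq
          let c₁ : G.Walk x x := Walk.cons h₂ t₂
          let c₂ : G.Walk x x := d₂.append (Walk.cons h t)
          have hlen : c₁.length + c₂.length = (Walk.cons h p).length := by
            have e1 : t.length + d.length = p.length := by
              have := congrArg Walk.length hspec; simpa [Walk.length_append] using this
            have e2 : t₂.length + d₂.length = q.length := by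
              have := congrArg Walk.length hspec2; simpa [Walk.length_append] using this
            have e3 : d.length = q.length + 1 := by rw [hdd]; simp
            simp only [c₁, c₂, Walk.length_cons, Walk.length_append]
            omega
          have hc₁pos : 1 ≤ c₁.length := by simp [c₁]
          have hc₂pos : 1 ≤ c₂.length := by
            simp only [c₂, Walk.length_append, Walk.length_cons]; omega
          rcases Nat.even_or_odd c₁.length with hev | hodd₁
          · have hodd₂ : Odd c₂.length := by
              rw [← hlen] at hodd
              rcases hodd with ⟨k, hk⟩
              rcases hev with ⟨m, hm⟩
              exact ⟨k - m, by omega⟩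
            exact ih c₂ (by have := hlen ▸ hl; omega) hodd₂
          · exact ih c₁ (by have := hlen ▸ hl; omega) hodd₁

lemma exists_odd_cycle {u : V} (w : G.Walk u u) (h : Odd w.length) :
    ∃ (v : V) (c : G.Walk v v), c.IsCycle ∧ Odd c.length :=
  exists_odd_cycle_aux w.length w le_rfl h

lemma colorable_two_of_no_odd_closed
    (h : ∀ (v : V) (w : G.Walk v v), ¬Odd w.length) : G.Colorable 2 := by
  classical
  have key : ∀ {a b : V} (w₁ w₂ : G.Walk a b), (Odd w₁.length ↔ Odd w₂.length) := by
    intro a b w₁ w₂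
    have hcl := h a (w₁.append w₂.reverse)
    rw [Walk.length_append, Walk.length_reverse] at hcl
    simp only [Nat.odd_iff] at hcl ⊢
    omega
  have hreach : ∀ v : V, G.Reachable ((G.connectedComponentMk v).out) v := by
    intro v
    apply ConnectedComponent.exact
    exact Quot.out_eq _
  let wlk : ∀ v : V, G.Walk ((G.connectedComponentMk v).out) v := fun v =>
    (hreach v).some
  let c : V → Bool := fun v => decide (Odd (wlk v).length)
  have valid : ∀ {x y : V}, G.Adj x y → c x ≠ c y := by
    intro x y hadj
    have hcc : (G.connectedComponentMk y).out = (G.connectedComponentMk x).out := by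
      congr 1
      exact (ConnectedComponent.connectedComponentMk_eq_of_adj hadj).symm
    have hpar := key (wlk x) (((wlk y).copy hcc rfl).concat hadj.symm)
    rw [Walk.length_concat, Walk.length_copy, Nat.odd_add_one] at hpar
    simp only [c, ne_eq, decide_eq_decide]
    tauto
  have C : G.Coloring Bool := Coloring.mk c fun hadj => valid hadj
  simpa using C.colorable

lemma two_le_chromaticNumber_of_adj {a b : V} (hab : G.Adj a b) :
    2 ≤ G.chromaticNumber := by
  by_contra hlt
  push_neg at hlt
  have h1 : G.chromaticNumber ≤ (1 : ℕ) := by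
    simpa using hlt
  have hc : G.Colorable 1 := chromaticNumber_le_iff_colorable.mp h1
  obtain ⟨C⟩ := hc
  exact C.valid hab (Subsingleton.elim _ _)

end Aux

/-- If `G` has exactly two odd cycles and these two cycles have a common edge, then
`esχ(G) = 1`. -/
theorem two_odd_cycles_common_edge {V : Type} [Fintype V] (G : SimpleGraph V)
    (H₁ H₂ : G.Subgraph) (h₁ : IsOddCycleSubgraph G H₁) (h₂ : IsOddCycleSubgraph G H₂)
    (hne : H₁ ≠ H₂)
    (hall : ∀ H : G.Subgraph, IsOddCycleSubgraph G H → H = H₁ ∨ H = H₂)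
    (hedge : (H₁.edgeSet ∩ H₂.edgeSet).Nonempty) :
    esChi G = 1 := by
  classical
  obtain ⟨u₁, w₁, hw₁c, hw₁odd, hw₁sub⟩ := h₁
  obtain ⟨e, he₁, he₂⟩ := hedge
  have heG : e ∈ G.edgeSet := H₁.edgeSet_subset he₁
  clear h₂ hne
  revert he₁ he₂ heG
  induction e using Sym2.ind with
  | _ a b =>
  intro he₁ he₂ heG
  have hab : G.Adj a b := heG
  set G' := G.deleteEdges {s(a, b)} with hG'
  have h3le : (3 : ℕ∞) ≤ G.chromaticNumber :=
    Walk.three_le_chromaticNumber_of_odd_loop w₁ hw₁odd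
  have hle : G' ≤ G := deleteEdges_le _
  -- no odd cycle in G'
  have hnoc : ∀ (v : V) (c : G'.Walk v v), c.IsCycle → ¬Odd c.length := by
    intro v c hc hodd
    let c' := c.mapLe hle
    have hc' : c'.IsCycle := hc.mapLe hle
    have hlenc : c'.length = c.length := Walk.length_map _ c
    have hOC : IsOddCycleSubgraph G c'.toSubgraph :=
      ⟨v, c', hc', by rw [hlenc]; exact hodd, rfl⟩
    have hmem : s(a, b) ∈ c'.toSubgraph.edgeSet := by
      rcases hall _ hOC with hh | hh
      · rw [hh]; exact he₁
      · rw [hh]; exact he₂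
    rw [Walk.mem_edges_toSubgraph] at hmem
    have hedg : c'.edges = c.edges := by
      simp only [c', Walk.mapLe, Walk.edges_map]
      have hid : Sym2.map ⇑(Hom.ofLE hle) = id := by
        funext z
        induction z using Sym2.ind with
        | _ p q =>
          simp only [Sym2.map_pair_eq, id_eq, Sym2.eq_iff]
          exact Or.inl ⟨rfl, rfl⟩
      rw [hid, List.map_id]
    rw [hedg] at hmem
    have := c.edges_subset_edgeSet hmem
    rw [hG', edgeSet_deleteEdges] at this
    simp at this
  -- no odd closed walk in G'
  have hnow : ∀ (v : V) (w : G'.Walk v v), ¬Odd w.length := by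
    intro v w hodd
    obtain ⟨x, c, hc, hco⟩ := exists_odd_cycle w hodd
    exact hnoc x c hc hco
  have hcol2 : G'.Colorable 2 := colorable_two_of_no_odd_closed hnow
  -- an edge of G' coming from w₁
  have hedges_len : 3 ≤ w₁.edges.length := by
    have := w₁.length_edges
    have := hw₁c.three_le_length
    omega
  have hein : s(a, b) ∈ w₁.edges := by
    exact (w₁.mem_edges_toSubgraph).mp (by rw [hw₁sub]; exact he₁)
  have hnodup : w₁.edges.Nodup := hw₁c.isTrail.edges_nodup
  obtain ⟨f, hf_mem, hf_ne⟩ : ∃ f ∈ w₁.edges, f ≠ s(a, b) := by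
    rcases hl : w₁.edges with _ | ⟨f₁, _ | ⟨f₂, rest⟩⟩
    · rw [hl] at hedges_len; simp at hedges_len
    · rw [hl] at hedges_len; simp at hedges_len
    · have hne12 : f₁ ≠ f₂ := by
        rw [hl] at hnodup
        simp only [List.nodup_cons, List.mem_cons] at hnodup
        tauto
      by_cases h1 : f₁ = s(a, b)
      · exact ⟨f₂, by simp [hl], by rw [← h1]; exact hne12.symm⟩
      · exact ⟨f₁, by simp [hl], h1⟩
  have hfG' : f ∈ G'.edgeSet := by
    rw [hG', edgeSet_deleteEdges]
    exact ⟨w₁.edges_subset_edgeSet hf_mem, by simpa using hf_ne⟩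
  have h2le : (2 : ℕ∞) ≤ G'.chromaticNumber := by
    revert hfG'
    induction f using Sym2.ind with
    | _ x y =>
      intro hfG'
      exact _root_.two_le_chromaticNumber_of_adj hfG'
  have hχG' : G'.chromaticNumber = 2 := by
    refine le_antisymm ?_ h2le
    have := chromaticNumber_le_iff_colorable.mpr hcol2
    exact_mod_cast this
  -- χ(G) ≤ 3
  have hcol3 : G.Colorable 3 := by
    obtain ⟨C⟩ := hcol2
    have C3 : G.Coloring (Option (Fin 2)) := Coloring.mk
      (fun x => if x = a then none else some (C x))
      (by
        intro x y hxy
        by_cases hx : x = a <;> by_cases hy : y = a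
        · subst hx; subst hy; exact absurd rfl hxy.ne
        · subst hx; simp [hy]
        · subst hy; simp [hx]
        · simp only [if_neg hx, if_neg hy, ne_eq, Option.some_inj]
          have hadj' : G'.Adj x y := by
            rw [hG']
            simp only [deleteEdges_adj, Set.mem_singleton_iff]
            refine ⟨hxy, ?_⟩
            rw [Sym2.eq_iff]
            rintro (⟨rfl, rfl⟩ | ⟨rfl, rfl⟩)
            · exact hx rfl
            · exact hy rfl
          exact C.valid hadj')
    have := C3.colorable
    simpa using this
  have h3ge : G.chromaticNumber ≤ (3 : ℕ∞) := by
    have := chromaticNumber_le_iff_colorable.mpr hcol3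
    exact_mod_cast this
  have hχG : G.chromaticNumber = 3 := le_antisymm h3ge h3le
  -- the defining set of esChi
  set S : Set ℕ := {n : ℕ | ∃ F : Finset (Sym2 V), ↑F ⊆ G.edgeSet ∧ F.card = n ∧
    (G.deleteEdges ↑F).chromaticNumber + 1 = G.chromaticNumber} with hS
  have h1mem : 1 ∈ S := by
    refine ⟨{s(a, b)}, ?_, Finset.card_singleton _, ?_⟩
    · intro z hz
      simp only [Finset.coe_singleton, Set.mem_singleton_iff] at hz
      rw [hz]; exact heG
    · rw [Finset.coe_singleton, ← hG', hχG', hχG]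
      rfl
  have h0not : (0 : ℕ) ∉ S := by
    rintro ⟨F, hFsub, hFcard, hFeq⟩
    rw [Finset.card_eq_zero] at hFcard
    subst hFcard
    rw [Finset.coe_empty, deleteEdges_empty, hχG] at hFeq
    exact absurd hFeq (by decide)
  have hle1 : sInf S ≤ 1 := Nat.sInf_le h1mem
  have hmemS : sInf S ∈ S := Nat.sInf_mem ⟨1, h1mem⟩
  have hne0 : sInf S ≠ 0 := fun h0 => h0not (h0 ▸ hmemS)
  show sInf S = 1
  omega
end

section
/- If $G$ is a $(3,2)$-critical graph that contains exactly four odd cycles, then every edge of $G$ is contained in at least two odd cycles of $G$. -/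
open SimpleGraph

namespace OddCycAux

variable {V : Type} {G : SimpleGraph V}

private lemma zmod_two_add_of_ne {a b : ZMod 2} (h : a ≠ b) : a + b = 1 := by
  revert a b; decide

/-- In a walk with nodup support from `y` to `u`, if the edge `s(u,y)` occurs, the walk has
length 1. -/
private lemma length_eq_one_of_mem_edges {y u : V} (r : G.Walk y u) (hne : u ≠ y)
    (hr : r.support.Nodup) (he : s(u, y) ∈ r.edges) : r.length = 1 := by
  cases r with
  | nil => simp at he
  | @cons _ z _ hadj r' =>
    rw [Walk.edges_cons, List.mem_cons] at he
    rw [Walk.support_cons] at hr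
    rcases he with he | he
    · rw [Sym2.eq_iff] at he
      rcases he with ⟨h1, _⟩ | ⟨h1, _⟩
      · exact absurd h1 hne
      · subst h1
        cases r' with
        | nil => simp
        | @cons _ w _ hadj' r'' =>
          exfalso
          have h2 := (List.nodup_cons.mp hr).2
          rw [Walk.support_cons] at h2
          exact (List.nodup_cons.mp h2).1 r''.end_mem_support
    · exfalso
      have hy : y ∈ r'.support := Walk.snd_mem_support_of_mem_edges r' he
      exact (List.nodup_cons.mp hr).1 hy

/-- Every odd closed walk contains an odd cycle. -/
private lemma exists_odd_cycle_aux : ∀ (n : ℕ) {u : V} (p : G.Walk u u), p.length ≤ n →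
    Odd p.length → ∃ (v : V) (c : G.Walk v v), c.IsCycle ∧ Odd c.length := by
  intro n
  induction n with
  | zero =>
    intro u p hl ho
    rw [Nat.le_zero] at hl
    rw [hl] at ho
    exact absurd ho (by decide)
  | succ n ih =>
    intro u p hl ho
    cases p with
    | nil => simp [Nat.odd_iff] at ho
    | @cons _ y _ hadj r =>
      classical
      by_cases hnd : r.support.Nodup
      · by_cases he : s(u, y) ∈ r.edges
        · have h1 := length_eq_one_of_mem_edges r hadj.ne hnd he
          rw [Walk.length_cons, h1] at ho
          norm_num [Nat.odd_iff] at ho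
        · exact ⟨u, Walk.cons hadj r,
            (Walk.cons_isCycle_iff r hadj).mpr ⟨Walk.IsPath.mk' hnd, he⟩, ho⟩
      · obtain ⟨x, hx2⟩ : ∃ x, 2 ≤ r.support.count x := by
          by_contra hc
          push_neg at hc
          exact hnd (List.nodup_iff_count_le_one.mpr fun a => by have := hc a; omega)
        have hxs : x ∈ r.support := by
          by_contra hxx
          rw [List.count_eq_zero_of_not_mem hxx] at hx2; omega
        have hspec := r.take_spec hxs
        have hsup : r.support = (r.takeUntil x hxs).support ++ (r.dropUntil x hxs).support.tail := by
          conv_lhs => rw [← hspec]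
          exact Walk.support_append _ _
        have hcount1 := r.count_support_takeUntil_eq_one hxs
        have hlen : (r.takeUntil x hxs).length + (r.dropUntil x hxs).length = r.length := by
          conv_rhs => rw [← hspec]
          exact (Walk.length_append _ _).symm
        have hxtail : x ∈ (r.dropUntil x hxs).support.tail := by
          by_contra hxx
          rw [hsup, List.count_append, hcount1, List.count_eq_zero_of_not_mem hxx] at hx2
          omega
        cases hdrop : r.dropUntil x hxs with
        | nil => rw [hdrop] at hxtail; simp at hxtail
        | @cons _ z _ hadj2 t =>
          rw [hdrop] at hxtail hlen
          rw [Walk.support_cons, List.tail_cons] at hxtail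
          rw [Walk.length_cons] at hlen
          have hmlen := t.length_takeUntil_le hxtail
          have hdlen := t.length_dropUntil_le hxtail
          have htlen : (t.takeUntil x hxtail).length + (t.dropUntil x hxtail).length
              = t.length := by
            conv_rhs => rw [← t.take_spec hxtail]
            exact (Walk.length_append _ _).symm
          set A : G.Walk x x := Walk.cons hadj2 (t.takeUntil x hxtail) with hA
          set B : G.Walk u u :=
            Walk.cons hadj ((r.takeUntil x hxs).append (t.dropUntil x hxtail)) with hB
          have hAlen : A.length = (t.takeUntil x hxtail).length + 1 := by
            simp [hA]
          have hBlen : B.length =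
              (r.takeUntil x hxs).length + (t.dropUntil x hxtail).length + 1 := by
            simp [hB, Walk.length_append]
          rw [Walk.length_cons] at hl
          rw [Walk.length_cons, Nat.odd_iff] at ho
          rcases Nat.even_or_odd A.length with hae | hao
          · have hbo : Odd B.length := by
              rcases hae with ⟨k, hk⟩
              rw [Nat.odd_iff]
              omega
            exact ih B (by omega) hbo
          · exact ih A (by omega) hao

private lemma exists_odd_cycle {u : V} (p : G.Walk u u) (h : Odd p.length) :
    ∃ (v : V) (c : G.Walk v v), c.IsCycle ∧ Odd c.length :=
  exists_odd_cycle_aux p.length p le_rfl h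

/-- A graph with no odd cycle admits a proper 2-coloring (into `ZMod 2`). -/
private lemma exists_two_coloring (H : SimpleGraph V)
    (hnc : ∀ (v : V) (w : H.Walk v v), w.IsCycle → ¬ Odd w.length) :
    ∃ c : V → ZMod 2, ∀ {x y : V}, H.Adj x y → c x ≠ c y := by
  classical
  have hev : ∀ (v : V) (w : H.Walk v v), Even w.length := by
    intro v w
    rw [← Nat.not_odd_iff_even]
    intro hodd
    obtain ⟨v', c', hc', ho'⟩ := exists_odd_cycle w hodd
    exact hnc v' c' hc' ho'
  have hreach : ∀ v : V, H.Reachable v (H.connectedComponentMk v).out :=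
    fun v => (ConnectedComponent.exact (Quot.out_eq (H.connectedComponentMk v)).symm)
  refine ⟨fun v => (((hreach v).some.length : ℕ) : ZMod 2), ?_⟩
  intro x y hxy hc
  have hrepeq : (H.connectedComponentMk x).out = (H.connectedComponentMk y).out := by
    rw [ConnectedComponent.connectedComponentMk_eq_of_adj hxy]
  have hmod := (ZMod.natCast_eq_natCast_iff' _ _ _).mp hc
  set wx := (hreach x).some with hwx
  set wy := (hreach y).some with hwy
  have hq := hev x ((Walk.cons hxy (wy.copy rfl hrepeq.symm)).append wx.reverse)
  rw [Walk.length_append, Walk.length_cons, Walk.length_copy, Walk.length_reverse,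
    Nat.even_iff] at hq
  omega

/-- A graph with no odd cycle is 2-colorable. -/
private lemma colorable_two_of_no_odd_cycle (H : SimpleGraph V)
    (hnc : ∀ (v : V) (w : H.Walk v v), w.IsCycle → ¬ Odd w.length) : H.Colorable 2 := by
  obtain ⟨c, hc⟩ := exists_two_coloring H hnc
  have := (Coloring.mk c fun {x y} h => hc h : H.Coloring (ZMod 2)).colorable
  rwa [ZMod.card] at this

private lemma chrom_eq_two (H : SimpleGraph V) {x y : V} (hadj : H.Adj x y)
    (hcol : H.Colorable 2) : H.chromaticNumber = ((2 : ℕ) : ℕ∞) := by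
  refine le_antisymm hcol.chromaticNumber_le ?_
  by_contra hlt
  rw [not_le] at hlt
  have h21 : ((2 : ℕ) : ℕ∞) = ((1 : ℕ) : ℕ∞) + 1 := by norm_num
  rw [h21] at hlt
  have h1 : H.chromaticNumber ≤ ((1 : ℕ) : ℕ∞) := Order.le_of_lt_add_one hlt
  obtain ⟨co⟩ := chromaticNumber_le_iff_colorable.mp h1
  have := co.valid hadj
  exact this (Subsingleton.elim _ _)

/-- If deleting `s` yields a 2-colorable graph, every odd cycle meets `s`. -/
private lemma hits_of_colorable_two (H : SimpleGraph V) (s : Set (Sym2 V))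
    (hcol : (H.deleteEdges s).Colorable 2) {u : V} {w : H.Walk u u} (hc : w.IsCycle)
    (ho : Odd w.length) : ∃ e ∈ w.edges, e ∈ s := by
  by_contra hno
  push_neg at hno
  have hsub : ∀ e ∈ w.edges, e ∈ (H.deleteEdges s).edgeSet := fun e hee => by
    rw [edgeSet_deleteEdges]
    exact ⟨w.edges_subset_edgeSet hee, hno e hee⟩
  have h3 := Walk.three_le_chromaticNumber_of_odd_loop (w.transfer _ hsub)
    (by rwa [Walk.length_transfer])
  have h2 := hcol.chromaticNumber_le
  have : (3 : ℕ∞) ≤ ((2 : ℕ) : ℕ∞) := le_trans h3 h2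
  norm_num at this

private lemma exists_edge_of_mem_support {a b : V} (w : G.Walk a b) (hn : ¬ w.Nil) :
    ∀ v ∈ w.support, ∃ e ∈ w.edges, v ∈ e := by
  induction w with
  | nil => exact absurd Walk.nil_nil hn
  | @cons a y b hadj r ih =>
    intro v hv
    rw [Walk.support_cons, List.mem_cons] at hv
    rcases hv with rfl | hv
    · exact ⟨s(v, y), by simp, Sym2.mem_mk_left _ _⟩
    · cases r with
      | nil =>
        have : v = y := by simpa using hv
        subst this
        exact ⟨s(a, v), by simp, Sym2.mem_mk_right _ _⟩
      | cons hadj2 t =>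
        obtain ⟨e, he, hve⟩ := ih (Walk.not_nil_cons) v hv
        exact ⟨e, by rw [Walk.edges_cons]; exact List.mem_cons_of_mem _ he, hve⟩

private lemma mem_support_of_mem_edges {a b v : V} (w : G.Walk a b) {e : Sym2 V}
    (he : e ∈ w.edges) (hv : v ∈ e) : v ∈ w.support := by
  induction e with
  | _ x y =>
    rw [Sym2.mem_iff] at hv
    rcases hv with rfl | rfl
    · exact w.fst_mem_support_of_mem_edges he
    · exact w.snd_mem_support_of_mem_edges he

private lemma toSubgraph_eq_of_edges_eq {a b : V} (w : G.Walk a a) (w' : G.Walk b b)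
    (hn : ¬ w.Nil) (hn' : ¬ w'.Nil) (h : ∀ e : Sym2 V, e ∈ w.edges ↔ e ∈ w'.edges) :
    w.toSubgraph = w'.toSubgraph := by
  have hadj : ∀ x y : V, w.toSubgraph.Adj x y ↔ w'.toSubgraph.Adj x y := by
    intro x y
    rw [← Subgraph.mem_edgeSet, ← Subgraph.mem_edgeSet, Walk.mem_edges_toSubgraph,
      Walk.mem_edges_toSubgraph]
    exact h _
  refine Subgraph.ext ?_ ?_
  · ext v
    rw [Walk.mem_verts_toSubgraph, Walk.mem_verts_toSubgraph]
    constructor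
    · intro hv
      obtain ⟨e, he, hve⟩ := exists_edge_of_mem_support w hn v hv
      exact mem_support_of_mem_edges w' ((h e).mp he) hve
    · intro hv
      obtain ⟨e, he, hve⟩ := exists_edge_of_mem_support w' hn' v hv
      exact mem_support_of_mem_edges w ((h e).mpr he) hve
  · ext x y
    exact hadj x y

private lemma card_symmDiff_identity {α : Type*} [DecidableEq α] (A B : Finset α) :
    (symmDiff A B).card + 2 * (A ∩ B).card = A.card + B.card := by
  have h1 : symmDiff A B = (A \ B) ∪ (B \ A) := by
    rw [symmDiff_def]; rfl
  have h2 : Disjoint (A \ B) (B \ A) := disjoint_sdiff_sdiff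
  have h3 := Finset.card_inter_add_card_sdiff A B
  have h4 := Finset.card_inter_add_card_sdiff B A
  rw [h1, Finset.card_union_of_disjoint h2]
  rw [Finset.inter_comm] at h4
  omega

private lemma even_card_symmDiff {α : Type*} [DecidableEq α] {A B : Finset α}
    (hA : Even A.card) (hB : Even B.card) : Even ((symmDiff A B).card) := by
  have := card_symmDiff_identity A B
  rcases hA with ⟨m, hm⟩; rcases hB with ⟨k, hk⟩
  refine ⟨((symmDiff A B).card + 1) / 2, by omega⟩

private lemma odd_card_symmDiff_odd {α : Type*} [DecidableEq α] {A B : Finset α}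
    (hA : Odd A.card) (hB : Even B.card) : Odd ((symmDiff A B).card) := by
  have := card_symmDiff_identity A B
  rcases hA with ⟨m, hm⟩; rcases hB with ⟨k, hk⟩
  refine ⟨(symmDiff A B).card / 2, by omega⟩

private lemma filter_symmDiff {α : Type*} [DecidableEq α] (A B : Finset α)
    (p : α → Prop) [DecidablePred p] :
    (symmDiff A B).filter p = symmDiff (A.filter p) (B.filter p) := by
  ext a
  simp only [Finset.mem_filter, Finset.mem_symmDiff]
  tauto

/-- each vertex is incident to an even number of edges of a cycle -/
private lemma even_card_filter_mem [DecidableEq V] {u : V} {w : G.Walk u u}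
    (hc : w.IsCycle) (v : V) :
    Even ((w.edges.toFinset.filter (fun e => v ∈ e)).card) := by
  have h2 : Even (w.edges.countP (fun e => decide (v ∈ e))) :=
    (hc.isTrail.even_countP_edges_iff v).mpr (fun h => absurd rfl h)
  have h3 : w.edges.countP (fun e => decide (v ∈ e))
      = (w.edges.filter (fun e => decide (v ∈ e))).length := List.countP_eq_length_filter
  have h4 : (w.edges.toFinset.filter (fun e => v ∈ e))
      = (w.edges.filter (fun e => decide (v ∈ e))).toFinset := by
    rw [List.toFinset_filter]
    exact Finset.filter_congr (fun x _ => by simp)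
  rw [h4, List.toFinset_card_of_nodup (hc.isTrail.edges_nodup.filter _), ← h3]
  exact h2

private lemma enat_add_one_eq_three {x : ℕ∞} (h : x + 1 = ((3 : ℕ) : ℕ∞)) :
    x = ((2 : ℕ) : ℕ∞) := by
  cases x with
  | top => rw [top_add] at h; exact absurd h (by norm_num)
  | coe n =>
    rw [show ((n : ℕ∞) + 1) = ((n + 1 : ℕ) : ℕ∞) by push_cast; ring] at h
    have : n + 1 = 3 := by exact_mod_cast h
    have : n = 2 := by omega
    exact_mod_cast congrArg (Nat.cast : ℕ → ℕ∞) this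

/-- Parity lemma: if `T ⊆ E(G)` has all even vertex-incidences and no odd cycle of `G` lies
entirely inside `T`, then `|T|` is even. -/
private lemma even_card_of_no_odd_cycle_subset [Fintype V] [DecidableEq V]
    (T : Finset (Sym2 V)) (hTs : ↑T ⊆ G.edgeSet)
    (hdeg : ∀ v : V, Even ((T.filter (fun e => v ∈ e)).card))
    (hno : ∀ (v : V) (w : G.Walk v v), w.IsCycle → Odd w.length →
      ¬ (∀ e ∈ w.edges, e ∈ T)) :
    Even T.card := by
  classical
  set K := G.deleteEdges (G.edgeSet \ ↑T) with hK
  have hKedge : ∀ e, e ∈ K.edgeSet ↔ e ∈ T ∧ e ∈ G.edgeSet := by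
    intro e
    rw [hK, edgeSet_deleteEdges]
    simp only [Set.mem_diff, Finset.mem_coe]
    tauto
  have hKno : ∀ (v : V) (w : K.Walk v v), w.IsCycle → ¬ Odd w.length := by
    intro v w hcy hod
    have hsub : ∀ e ∈ w.edges, e ∈ G.edgeSet := fun e h' =>
      ((hKedge e).mp (w.edges_subset_edgeSet h')).2
    refine hno v (w.transfer G hsub) (hcy.transfer hsub) (by rwa [Walk.length_transfer]) ?_
    intro e he
    rw [Walk.edges_transfer] at he
    exact ((hKedge e).mp (w.edges_subset_edgeSet he)).1
  obtain ⟨c, hc⟩ := exists_two_coloring K hKno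
  have h1 : ∀ (x y : V), s(x, y) ∈ T → (∑ v : V, if v ∈ s(x, y) then c v else 0) = (1 : ZMod 2) := by
    intro x y heT
    have heG : s(x, y) ∈ G.edgeSet := hTs heT
    have hadj : G.Adj x y := (G.mem_edgeSet).mp heG
    have hKadj : K.Adj x y := (K.mem_edgeSet).mp ((hKedge _).mpr ⟨heT, heG⟩)
    rw [← Finset.sum_filter]
    have hfil : Finset.univ.filter (fun v => v ∈ s(x, y)) = {x, y} := by
      ext z; simp [Sym2.mem_iff]
    rw [hfil, Finset.sum_pair hadj.ne]
    exact zmod_two_add_of_ne (hc hKadj)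
  have key : ((T.card : ℕ) : ZMod 2) = 0 := by
    calc ((T.card : ℕ) : ZMod 2) = ∑ _e ∈ T, (1 : ZMod 2) := by simp
      _ = ∑ e ∈ T, ∑ v : V, (if v ∈ e then c v else 0) := by
          refine Finset.sum_congr rfl (fun e he => ?_)
          revert he
          refine Sym2.ind (fun x y he => ?_) e
          exact (h1 x y he).symm
      _ = ∑ v : V, ∑ e ∈ T, (if v ∈ e then c v else 0) := Finset.sum_comm
      _ = 0 := by
          refine Finset.sum_eq_zero (fun v _ => ?_)
          rw [← Finset.sum_filter, Finset.sum_const]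
          obtain ⟨k, hk⟩ := hdeg v
          rw [hk, add_nsmul]
          exact (by decide : ∀ y : ZMod 2, y + y = 0) _
  rw [CharP.cast_eq_zero_iff (ZMod 2) 2] at key
  exact (even_iff_two_dvd).mpr key

private lemma even_card_symmDiff_of_odd_odd {α : Type*} [DecidableEq α] {A B : Finset α}
    (hA : Odd A.card) (hB : Odd B.card) : Even ((symmDiff A B).card) := by
  have := card_symmDiff_identity A B
  rcases hA with ⟨m, hm⟩; rcases hB with ⟨k, hk⟩
  refine ⟨(symmDiff A B).card / 2, by omega⟩

private lemma exists_adj_of_mem_edgeSet (H : SimpleGraph V) {e : Sym2 V}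
    (he : e ∈ H.edgeSet) : ∃ x y, H.Adj x y := by
  revert he
  refine Sym2.ind (fun x y he => ?_) e
  exact ⟨x, y, (H.mem_edgeSet).mp he⟩

end OddCycAux

open OddCycAux

/-- If `G` is `(3,2)`-critical with exactly four odd cycles, then every edge of `G` lies in
at least two odd cycles of `G`. -/
theorem every_edge_in_two_odd_cycles {V : Type} [Fintype V] (G : SimpleGraph V)
    (hcrit : IsKLCritical G 3 2)
    (hcyc : {H : G.Subgraph | IsOddCycleSubgraph G H}.ncard = 4) :
    ∀ e ∈ G.edgeSet, ∃ H₁ H₂ : G.Subgraph,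
      IsOddCycleSubgraph G H₁ ∧ IsOddCycleSubgraph G H₂ ∧ H₁ ≠ H₂ ∧
      e ∈ H₁.edgeSet ∧ e ∈ H₂.edgeSet := by
  classical
  obtain ⟨hES, hχ, hes⟩ := hcrit
  intro e he
  by_contra hgoal
  push_neg at hgoal
  set S := {H : G.Subgraph | IsOddCycleSubgraph G H} with hSdef
  have hfinSub : Finite G.Subgraph := by
    have hf : Function.Injective (fun H : G.Subgraph => (H.verts, H.Adj)) := by
      intro a b hab
      exact SimpleGraph.Subgraph.ext (congrArg Prod.fst hab) (congrArg Prod.snd hab)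
    exact Finite.of_injective _ hf
  have hSfin : S.Finite := Set.toFinite S
  have hSne : S.Nonempty := Set.nonempty_of_ncard_ne_zero (by rw [hcyc]; omega)
  -- (A): every edge of G misses some odd cycle subgraph
  have hA : ∀ f ∈ G.edgeSet, ∃ H, IsOddCycleSubgraph G H ∧ f ∉ H.edgeSet := by
    intro f hf
    by_contra hall
    push_neg at hall
    obtain ⟨C₀, hC₀⟩ := hSne
    obtain ⟨u₀, w₀, hc₀, ho₀, hCeq₀⟩ := hC₀
    have hcard₀ : 3 ≤ w₀.edges.toFinset.card := by
      rw [List.toFinset_card_of_nodup hc₀.isTrail.edges_nodup, SimpleGraph.Walk.length_edges]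
      exact hc₀.three_le_length
    obtain ⟨e', he'm, he'f⟩ := Finset.exists_mem_ne (s := w₀.edges.toFinset) (by omega) f
    have he'G : e' ∈ G.edgeSet := w₀.edges_subset_edgeSet (List.mem_toFinset.mp he'm)
    have hK2 : (G.deleteEdges {f}).chromaticNumber = ((2 : ℕ) : ℕ∞) := by
      obtain ⟨x, y, hxy⟩ := exists_adj_of_mem_edgeSet (G.deleteEdges {f})
        (by rw [SimpleGraph.edgeSet_deleteEdges]; exact ⟨he'G, by simpa using he'f⟩)
      refine chrom_eq_two _ hxy (colorable_two_of_no_odd_cycle _ ?_)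
      intro v w hcyc' hod'
      have hsub : ∀ e₁ ∈ w.edges, e₁ ∈ G.edgeSet := by
        intro e₁ h₁
        have h₂ := w.edges_subset_edgeSet h₁
        rw [SimpleGraph.edgeSet_deleteEdges] at h₂
        exact h₂.1
      have hfmem := hall _ ⟨v, w.transfer G hsub, hcyc'.transfer _,
        (by rwa [SimpleGraph.Walk.length_transfer]), rfl⟩
      rw [SimpleGraph.Walk.mem_edges_toSubgraph, SimpleGraph.Walk.edges_transfer] at hfmem
      have h₃ := w.edges_subset_edgeSet hfmem
      rw [SimpleGraph.edgeSet_deleteEdges] at h₃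
      exact h₃.2 rfl
    have h1 : 1 ∈ {n : ℕ | ∃ F : Finset (Sym2 V), ↑F ⊆ G.edgeSet ∧ F.card = n ∧
        (G.deleteEdges ↑F).chromaticNumber + 1 = G.chromaticNumber} := by
      refine ⟨{f}, by simpa using hf, Finset.card_singleton f, ?_⟩
      rw [Finset.coe_singleton, hK2, hχ]
      norm_num
    have hle : esChi G ≤ 1 := Nat.sInf_le h1
    omega
  -- partner lemma
  have hpartner : ∀ h' ∈ G.edgeSet, ∃ f ∈ G.edgeSet, f ≠ h' ∧
      ∀ H, IsOddCycleSubgraph G H → h' ∉ H.edgeSet → f ∈ H.edgeSet := by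
    intro h' hh'
    obtain ⟨C, hCS, hCh⟩ := hA h' hh'
    obtain ⟨u₀, w₀, hc₀, ho₀, hCeq₀⟩ := hCS
    rw [← hCeq₀, SimpleGraph.Walk.mem_edges_toSubgraph] at hCh
    set G' := G.deleteEdges {h'} with hG'
    have hw₀G' : ∀ e₁ ∈ w₀.edges, e₁ ∈ G'.edgeSet := by
      intro e₁ h₁
      rw [hG', SimpleGraph.edgeSet_deleteEdges]
      refine ⟨w₀.edges_subset_edgeSet h₁, ?_⟩
      simp only [Set.mem_singleton_iff]
      rintro rfl
      exact hCh h₁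
    have hχ' : G'.chromaticNumber = ((3 : ℕ) : ℕ∞) := by
      refine le_antisymm ?_ ?_
      · rw [← hχ]
        exact SimpleGraph.chromaticNumber_mono G (SimpleGraph.deleteEdges_le _)
      · have h3 := SimpleGraph.Walk.three_le_chromaticNumber_of_odd_loop
          (w₀.transfer G' hw₀G') (by rwa [SimpleGraph.Walk.length_transfer])
        exact le_trans (by norm_num) h3
    obtain ⟨e₀, he₀⟩ : ∃ e₀, e₀ ∈ w₀.edges := by
      refine List.exists_mem_of_ne_nil _ ?_
      intro hnil
      have h0 := SimpleGraph.Walk.length_edges w₀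
      rw [hnil] at h0
      have := hc₀.three_le_length
      simp at h0
      omega
    have he₀G' : e₀ ∈ G'.edgeSet := hw₀G' e₀ he₀
    have hfinE : G'.edgeSet.Finite := Set.toFinite _
    set F₀ : Finset (Sym2 V) := hfinE.toFinset.erase e₀ with hF₀
    have hF₀coe : (↑F₀ : Set (Sym2 V)) = G'.edgeSet \ {e₀} := by
      rw [hF₀, Finset.coe_erase, Set.Finite.coe_toFinset]
    have hKedge2 : (G'.deleteEdges ↑F₀).edgeSet = {e₀} := by
      rw [SimpleGraph.edgeSet_deleteEdges, hF₀coe]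
      ext a
      simp only [Set.mem_diff, Set.mem_singleton_iff]
      constructor
      · tauto
      · rintro rfl
        exact ⟨he₀G', by tauto⟩
    have hK2' : (G'.deleteEdges ↑F₀).chromaticNumber = ((2 : ℕ) : ℕ∞) := by
      obtain ⟨x, y, hxy⟩ := exists_adj_of_mem_edgeSet (G'.deleteEdges ↑F₀)
        (by rw [hKedge2]; exact rfl)
      refine chrom_eq_two _ hxy (colorable_two_of_no_odd_cycle _ ?_)
      intro v w hcy hod
      have h3 : 3 ≤ w.edges.toFinset.card := by
        rw [List.toFinset_card_of_nodup hcy.isTrail.edges_nodup,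
          SimpleGraph.Walk.length_edges]
        exact hcy.three_le_length
      have hsub : w.edges.toFinset ⊆ ({e₀} : Finset (Sym2 V)) := by
        intro a ha
        rw [Finset.mem_singleton]
        have h4 := w.edges_subset_edgeSet (List.mem_toFinset.mp ha)
        rw [hKedge2] at h4
        exact h4
      have := Finset.card_le_card hsub
      rw [Finset.card_singleton] at this
      omega
    have hne : {n : ℕ | ∃ F : Finset (Sym2 V), ↑F ⊆ G'.edgeSet ∧ F.card = n ∧
        (G'.deleteEdges ↑F).chromaticNumber + 1 = G'.chromaticNumber}.Nonempty := by
      refine ⟨F₀.card, F₀, ?_, rfl, ?_⟩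
      · rw [hF₀coe]; exact Set.diff_subset
      · rw [hK2', hχ']; norm_num
    have hmem := Nat.sInf_mem hne
    have hlt : esChi G' < 2 := by
      have := hES h' hh'
      rw [hes] at this
      exact this
    have hsinf : sInf {n : ℕ | ∃ F : Finset (Sym2 V), ↑F ⊆ G'.edgeSet ∧ F.card = n ∧
        (G'.deleteEdges ↑F).chromaticNumber + 1 = G'.chromaticNumber} = esChi G' := rfl
    rw [hsinf] at hmem
    obtain ⟨F, hFsub, hFcard, hFchi⟩ := hmem
    have hcard1 : F.card ≤ 1 := by omega
    rcases Nat.le_one_iff_eq_zero_or_eq_one.mp hcard1 with h0 | h1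
    · exfalso
      rw [Finset.card_eq_zero] at h0
      subst h0
      rw [Finset.coe_empty, SimpleGraph.deleteEdges_empty, hχ'] at hFchi
      norm_num at hFchi
    · obtain ⟨f, rfl⟩ := Finset.card_eq_one.mp h1
      have hfG' : f ∈ G'.edgeSet := hFsub (by simp)
      have hfG : f ∈ G.edgeSet ∧ f ≠ h' := by
        rw [hG', SimpleGraph.edgeSet_deleteEdges] at hfG'
        exact ⟨hfG'.1, by simpa using hfG'.2⟩
      have hcol : (G'.deleteEdges ↑({f} : Finset (Sym2 V))).Colorable 2 := by
        rw [hχ'] at hFchi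
        exact SimpleGraph.chromaticNumber_le_iff_colorable.mp
          (le_of_eq (enat_add_one_eq_three hFchi))
      have hcomb : G'.deleteEdges ↑({f} : Finset (Sym2 V))
          = G.deleteEdges ({h'} ∪ {f}) := by
        rw [hG', Finset.coe_singleton, SimpleGraph.deleteEdges_deleteEdges]
      refine ⟨f, hfG.1, hfG.2, ?_⟩
      intro H hH hH'
      obtain ⟨v, w, hcy, hod, hHeq⟩ := hH
      rw [← hHeq, SimpleGraph.Walk.mem_edges_toSubgraph] at hH' ⊢
      obtain ⟨a, haw, has⟩ := hits_of_colorable_two G ({h'} ∪ {f})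
        (by rw [← hcomb]; exact hcol) hcy hod
      simp only [Set.mem_union, Set.mem_singleton_iff] at has
      rcases has with rfl | rfl
      · exact absurd haw hH'
      · exact haw
  -- e is in some odd cycle subgraph C₁
  obtain ⟨f₀, hf₀G, hf₀e, hf₀all⟩ := hpartner e he
  have hex : ∃ C, IsOddCycleSubgraph G C ∧ e ∈ C.edgeSet := by
    by_contra hnex
    push_neg at hnex
    obtain ⟨H₀, hH₀, hH₀f⟩ := hA f₀ hf₀G
    exact hH₀f (hf₀all H₀ hH₀ (hnex H₀ hH₀))
  obtain ⟨C₁, hC₁S, heC₁⟩ := hex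
  have huniq : ∀ H, IsOddCycleSubgraph G H → H ≠ C₁ → e ∉ H.edgeSet := by
    intro H hH hne heH
    exact hgoal C₁ H hC₁S hH (Ne.symm hne) heC₁ heH
  have hf₀mem : ∀ H, IsOddCycleSubgraph G H → H ≠ C₁ → f₀ ∈ H.edgeSet :=
    fun H hH hne => hf₀all H hH (huniq H hH hne)
  have hf₀C₁ : f₀ ∉ C₁.edgeSet := by
    obtain ⟨H₀, hH₀, hH₀f⟩ := hA f₀ hf₀G
    rcases eq_or_ne H₀ C₁ with rfl | hne
    · exact hH₀f
    · exact absurd (hf₀mem H₀ hH₀ hne) hH₀f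
  -- extract the other three odd cycle subgraphs
  have hC₁mem : C₁ ∈ S := hC₁S
  have hS3 : (S \ {C₁}).ncard = 3 := by
    rw [Set.ncard_diff_singleton_of_mem hC₁mem, hcyc]
  obtain ⟨C₂, C₃, C₄, h23, h24, h34, hset⟩ := Set.ncard_eq_three.mp hS3
  have hC₂ : C₂ ∈ S ∧ C₂ ≠ C₁ := by
    have h : C₂ ∈ S \ {C₁} := by rw [hset]; simp
    exact ⟨h.1, by simpa using h.2⟩
  have hC₃ : C₃ ∈ S ∧ C₃ ≠ C₁ := by
    have h : C₃ ∈ S \ {C₁} := by rw [hset]; simp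
    exact ⟨h.1, by simpa using h.2⟩
  have hC₄ : C₄ ∈ S ∧ C₄ ≠ C₁ := by
    have h : C₄ ∈ S \ {C₁} := by rw [hset]; simp
    exact ⟨h.1, by simpa using h.2⟩
  have hcomplete : ∀ H, H ∈ S → H = C₁ ∨ H = C₂ ∨ H = C₃ ∨ H = C₄ := by
    intro H hH
    rcases eq_or_ne H C₁ with rfl | hne
    · exact Or.inl rfl
    · have h : H ∈ S \ {C₁} := ⟨hH, by simpa using hne⟩
      rw [hset] at h
      simp only [Set.mem_insert_iff, Set.mem_singleton_iff] at h
      tauto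
  obtain ⟨u₁, w₁, hc₁, ho₁, hCeq₁⟩ := hC₁S
  obtain ⟨u₂, w₂, hc₂, ho₂, hCeq₂⟩ := hC₂.1
  obtain ⟨u₃, w₃, hc₃, ho₃, hCeq₃⟩ := hC₃.1
  obtain ⟨u₄, w₄, hc₄, ho₄, hCeq₄⟩ := hC₄.1
  -- pair step: for two cycles distinct from C₁, edges of w₁ lie in one iff in the other
  have pairstep : ∀ {v' v'' : V} (w' : G.Walk v' v') (w'' : G.Walk v'' v''),
      w'.IsCycle → Odd w'.length → w''.IsCycle → Odd w''.length →
      w'.toSubgraph ≠ C₁ → w''.toSubgraph ≠ C₁ →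
      ∀ a ∈ w₁.edges, (a ∈ w'.edges ↔ a ∈ w''.edges) := by
    intro v' v'' w' w'' hc' ho' hc'' ho'' hne' hne'' a ha
    set T : Finset (Sym2 V) :=
      symmDiff (symmDiff w₁.edges.toFinset w'.edges.toFinset) w''.edges.toFinset with hT
    have hTsub : ↑T ⊆ G.edgeSet := by
      intro b hb
      rw [hT] at hb
      simp only [Finset.mem_coe, Finset.mem_symmDiff, List.mem_toFinset] at hb
      have h : b ∈ w₁.edges ∨ b ∈ w'.edges ∨ b ∈ w''.edges := by tauto
      rcases h with h | h | h
      exacts [w₁.edges_subset_edgeSet h, w'.edges_subset_edgeSet h,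
        w''.edges_subset_edgeSet h]
    have hdeg : ∀ v : V, Even ((T.filter (fun e' => v ∈ e')).card) := by
      intro v
      rw [hT, filter_symmDiff, filter_symmDiff]
      exact even_card_symmDiff (even_card_symmDiff (even_card_filter_mem hc₁ v)
        (even_card_filter_mem hc' v)) (even_card_filter_mem hc'' v)
    have hcards : ∀ {vv : V} (ww : G.Walk vv vv), ww.IsCycle → Odd ww.length →
        Odd ww.edges.toFinset.card := by
      intro vv ww hcw how
      rwa [List.toFinset_card_of_nodup hcw.isTrail.edges_nodup,
        SimpleGraph.Walk.length_edges]
    have hTodd : Odd T.card := by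
      rw [hT, symmDiff_comm]
      exact odd_card_symmDiff_odd (hcards w'' hc'' ho'')
        (even_card_symmDiff_of_odd_odd (hcards w₁ hc₁ ho₁) (hcards w' hc' ho'))
    have hcyc_in : ∃ (vv : V) (ww : G.Walk vv vv), ww.IsCycle ∧ Odd ww.length ∧
        ∀ b ∈ ww.edges, b ∈ T := by
      by_contra hno
      push_neg at hno
      have hev := even_card_of_no_odd_cycle_subset T hTsub hdeg ?_
      · exact (Nat.not_even_iff_odd.mpr hTodd) hev
      · intro vv ww h1 h2 h3
        obtain ⟨b, hb1, hb2⟩ := hno vv ww h1 h2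
        exact hb2 (h3 b hb1)
    obtain ⟨vv, ww, hcyw, hodw, hallw⟩ := hcyc_in
    have hHS : ww.toSubgraph ∈ S := ⟨vv, ww, hcyw, hodw, rfl⟩
    have hf₀T : f₀ ∉ T := by
      have h1 : f₀ ∉ w₁.edges := by
        rw [← SimpleGraph.Walk.mem_edges_toSubgraph, hCeq₁]
        exact hf₀C₁
      have h2 : f₀ ∈ w'.edges := by
        have h := hf₀mem _ ⟨v', w', hc', ho', rfl⟩ hne'
        rwa [SimpleGraph.Walk.mem_edges_toSubgraph] at h
      have h3 : f₀ ∈ w''.edges := by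
        have h := hf₀mem _ ⟨v'', w'', hc'', ho'', rfl⟩ hne''
        rwa [SimpleGraph.Walk.mem_edges_toSubgraph] at h
      rw [hT]
      simp only [Finset.mem_symmDiff, List.mem_toFinset]
      tauto
    have hHC₁ : ww.toSubgraph = C₁ := by
      rcases hcomplete _ hHS with h | h | h | h
      · exact h
      all_goals {
        exfalso
        have hfH : f₀ ∈ ww.toSubgraph.edgeSet := by
          refine hf₀mem _ hHS ?_
          rw [h]
          first
          | exact hC₂.2
          | exact hC₃.2
          | exact hC₄.2
        rw [SimpleGraph.Walk.mem_edges_toSubgraph] at hfH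
        exact hf₀T (hallw f₀ hfH) }
    have haT : a ∈ T := by
      have h : a ∈ ww.toSubgraph.edgeSet := by
        rw [hHC₁, ← hCeq₁, SimpleGraph.Walk.mem_edges_toSubgraph]
        exact ha
      rw [SimpleGraph.Walk.mem_edges_toSubgraph] at h
      exact hallw a h
    rw [hT] at haT
    simp only [Finset.mem_symmDiff, List.mem_toFinset] at haT
    constructor
    · intro h'
      by_contra h''
      tauto
    · intro h'
      by_contra h''
      tauto
  -- disjointness of C₁'s edges from the others
  have hdis2 : ∀ a ∈ w₁.edges, a ∉ w₂.edges := by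
    intro a ha ha2
    have h3 : a ∈ w₃.edges := (pairstep w₂ w₃ hc₂ ho₂ hc₃ ho₃
      (hCeq₂ ▸ hC₂.2) (hCeq₃ ▸ hC₃.2) a ha).mp ha2
    have h4 : a ∈ w₄.edges := (pairstep w₂ w₄ hc₂ ho₂ hc₄ ho₄
      (hCeq₂ ▸ hC₂.2) (hCeq₄ ▸ hC₄.2) a ha).mp ha2
    obtain ⟨H₀, hH₀, hH₀a⟩ := hA a (w₁.edges_subset_edgeSet ha)
    rcases hcomplete H₀ hH₀ with h | h | h | h <;> subst h
    · exact hH₀a (by rw [← hCeq₁, SimpleGraph.Walk.mem_edges_toSubgraph]; exact ha)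
    · exact hH₀a (by rw [← hCeq₂, SimpleGraph.Walk.mem_edges_toSubgraph]; exact ha2)
    · exact hH₀a (by rw [← hCeq₃, SimpleGraph.Walk.mem_edges_toSubgraph]; exact h3)
    · exact hH₀a (by rw [← hCeq₄, SimpleGraph.Walk.mem_edges_toSubgraph]; exact h4)
  have hdis3 : ∀ a ∈ w₁.edges, a ∉ w₃.edges := by
    intro a ha ha3
    have h2 : a ∈ w₂.edges := (pairstep w₂ w₃ hc₂ ho₂ hc₃ ho₃
      (hCeq₂ ▸ hC₂.2) (hCeq₃ ▸ hC₃.2) a ha).mpr ha3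
    exact hdis2 a ha h2
  -- C₂ and C₃ have different edge sets
  have hneq : ∃ b : Sym2 V, (b ∈ w₂.edges ∧ b ∉ w₃.edges) ∨
      (b ∈ w₃.edges ∧ b ∉ w₂.edges) := by
    by_contra hcon
    push_neg at hcon
    have hiff : ∀ bb : Sym2 V, bb ∈ w₂.edges ↔ bb ∈ w₃.edges := by
      intro bb
      have h := hcon bb
      tauto
    have heq := toSubgraph_eq_of_edges_eq w₂ w₃ hc₂.not_nil hc₃.not_nil hiff
    rw [hCeq₂, hCeq₃] at heq
    exact h23 heq
  obtain ⟨b, hb⟩ := hneq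
  rcases hb with ⟨hb2, hb3⟩ | ⟨hb3, hb2⟩
  · obtain ⟨g, hgG, hgne, hgall⟩ := hpartner b (w₂.edges_subset_edgeSet hb2)
    have hg1 : g ∈ C₁.edgeSet := by
      refine hgall C₁ ⟨u₁, w₁, hc₁, ho₁, hCeq₁⟩ ?_
      rw [← hCeq₁, SimpleGraph.Walk.mem_edges_toSubgraph]
      intro hbw₁
      exact hdis2 b hbw₁ hb2
    have hg3 : g ∈ C₃.edgeSet := by
      refine hgall C₃ ⟨u₃, w₃, hc₃, ho₃, hCeq₃⟩ ?_
      rw [← hCeq₃, SimpleGraph.Walk.mem_edges_toSubgraph]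
      exact hb3
    rw [← hCeq₁, SimpleGraph.Walk.mem_edges_toSubgraph] at hg1
    rw [← hCeq₃, SimpleGraph.Walk.mem_edges_toSubgraph] at hg3
    exact hdis3 g hg1 hg3
  · obtain ⟨g, hgG, hgne, hgall⟩ := hpartner b (w₃.edges_subset_edgeSet hb3)
    have hg1 : g ∈ C₁.edgeSet := by
      refine hgall C₁ ⟨u₁, w₁, hc₁, ho₁, hCeq₁⟩ ?_
      rw [← hCeq₁, SimpleGraph.Walk.mem_edges_toSubgraph]
      intro hbw₁
      exact hdis3 b hbw₁ hb3
    have hg2 : g ∈ C₂.edgeSet := by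
      refine hgall C₂ ⟨u₂, w₂, hc₂, ho₂, hCeq₂⟩ ?_
      rw [← hCeq₂, SimpleGraph.Walk.mem_edges_toSubgraph]
      exact hb2
    rw [← hCeq₁, SimpleGraph.Walk.mem_edges_toSubgraph] at hg1
    rw [← hCeq₂, SimpleGraph.Walk.mem_edges_toSubgraph] at hg2
    exact hdis2 g hg1 hg2
end
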